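/- arXiv:0909.1134 — 8 statements merged into one kernel-verified Lean document; each statement's English description precedes it below -/
import Mathlib

section
/- The h-vector of a pure (d-1)-dimensional shellable simplicial complex can be computed from any shelling: h_i equals the number of facets in the shelling whose restriction face has cardinality i, for i = 0, 1, ..., d. -/
open Finset Polynomial

lemma lemA {V : Type*} [DecidableEq V] (S : Finset V) :
    ∑ β ∈ S.powerset, ((X : ℤ[X]) - 1) ^ (S.card - β.card) = X ^ S.card := by
  have h := Finset.prod_add (fun _ : V => (1 : ℤ[X])) (fun _ => (X : ℤ[X]) - 1) S
  simp only [Finset.prod_const, one_mul, Finset.prod_const_one] at h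
  have h1 : (1 + ((X : ℤ[X]) - 1)) = X := by ring
  rw [h1] at h
  rw [h]
  refine Finset.sum_congr rfl fun β hβ => ?_
  rw [Finset.card_sdiff_of_subset (Finset.mem_powerset.mp hβ), one_pow, one_mul]

open Classical in
/-- The h-vector of a pure `(d-1)`-dimensional shellable simplicial complex can be computed
from any shelling: `h i` equals the number of facets whose restriction face has cardinality
`i`.  The h-vector is encoded by the defining polynomial identity
`∑ hᵢ x^(d-i) = ∑ f_{i-1} (x-1)^(d-i)`. -/
theorem stmt0 {V : Type*} [DecidableEq V] (d s : ℕ)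
    (Δ : Finset (Finset V))
    (hdc : ∀ σ ∈ Δ, ∀ ρ ⊆ σ, ρ ∈ Δ)
    (hpure : ∀ σ ∈ Δ, ∃ τ ∈ Δ, τ.card = d ∧ σ ⊆ τ)
    (τ : Fin s → Finset V) (hinj : Function.Injective τ)
    (hmem : ∀ j, τ j ∈ Δ ∧ (τ j).card = d)
    (hsurj : ∀ σ ∈ Δ, σ.card = d → ∃ j, τ j = σ)
    (R : Fin s → Finset V)
    (hR : ∀ j, R j = (τ j).filter (fun v => ∃ k, k < j ∧ (τ j).erase v ⊆ τ k))
    (hshell : ∀ j, ∀ γ ⊆ τ j, (R j ⊆ γ ↔ ∀ k, k < j → ¬ γ ⊆ τ k)) :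
    ∑ i ∈ Finset.range (d + 1),
        (C ((Δ.filter (fun σ => σ.card = i)).card : ℤ)) * (X - 1) ^ (d - i)
      = ∑ i ∈ Finset.range (d + 1),
        (C ((Finset.univ.filter (fun j : Fin s => (R j).card = i)).card : ℤ)) * X ^ (d - i) := by
  classical
  have hRsub : ∀ j, R j ⊆ τ j := fun j => by rw [hR]; exact Finset.filter_subset _ _
  have hcard_le : ∀ σ ∈ Δ, σ.card ≤ d := by
    intro σ hσ
    obtain ⟨t, _, htc, hst⟩ := hpure σ hσ
    exact htc ▸ Finset.card_le_card hst
  have hRcard : ∀ j, (R j).card ≤ d :=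
    fun j => (hmem j).2 ▸ Finset.card_le_card (hRsub j)
  set P : Fin s → Finset (Finset V) :=
    fun j => (τ j).powerset.filter (fun γ => R j ⊆ γ) with hP
  -- LHS as a sum over Δ
  have hL : ∑ i ∈ Finset.range (d + 1),
      (C ((Δ.filter (fun σ => σ.card = i)).card : ℤ)) * (X - 1) ^ (d - i)
      = ∑ σ ∈ Δ, ((X : ℤ[X]) - 1) ^ (d - σ.card) := by
    rw [← Finset.sum_fiberwise_of_maps_to (g := fun σ : Finset V => σ.card)
      (fun σ hσ => Finset.mem_range.mpr (Nat.lt_succ_of_le (hcard_le σ hσ)))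
      (fun σ => ((X : ℤ[X]) - 1) ^ (d - σ.card))]
    refine Finset.sum_congr rfl fun i _ => ?_
    rw [Finset.sum_congr rfl (fun σ hσ => by rw [(Finset.mem_filter.mp hσ).2]),
      Finset.sum_const, nsmul_eq_mul]
    simp [map_natCast]
  -- RHS as a sum over Fin s
  have hRHS : ∑ i ∈ Finset.range (d + 1),
      (C ((Finset.univ.filter (fun j : Fin s => (R j).card = i)).card : ℤ)) * X ^ (d - i)
      = ∑ j : Fin s, (X : ℤ[X]) ^ (d - (R j).card) := by
    rw [← Finset.sum_fiberwise_of_maps_to (g := fun j : Fin s => (R j).card)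
      (fun j _ => Finset.mem_range.mpr (Nat.lt_succ_of_le (hRcard j)))
      (fun j => (X : ℤ[X]) ^ (d - (R j).card))]
    refine Finset.sum_congr rfl fun i _ => ?_
    rw [Finset.sum_congr rfl (fun j hj => by rw [(Finset.mem_filter.mp hj).2]),
      Finset.sum_const, nsmul_eq_mul]
    simp [map_natCast]
  rw [hL, hRHS]
  -- partition
  have hpart : Δ = Finset.univ.biUnion P := by
    ext σ
    simp only [Finset.mem_biUnion, Finset.mem_univ, true_and, hP,
      Finset.mem_filter, Finset.mem_powerset]
    constructor
    · intro hσ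
      obtain ⟨t, ht, htc, hst⟩ := hpure σ hσ
      obtain ⟨j0, hj0⟩ := hsurj t ht htc
      have hne : (Finset.univ.filter (fun j => σ ⊆ τ j)).Nonempty :=
        ⟨j0, by simp [hj0 ▸ hst]⟩
      set j := (Finset.univ.filter (fun j => σ ⊆ τ j)).min' hne with hj
      have hjsub : σ ⊆ τ j :=
        (Finset.mem_filter.mp (Finset.min'_mem _ hne)).2
      refine ⟨j, hjsub, ?_⟩
      exact (hshell j σ hjsub).mpr (fun k hk hks =>
        absurd (Finset.min'_le _ k (by simp [hks])) (not_le.mpr hk))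
    · rintro ⟨j, hγτ, hRγ⟩
      exact hdc (τ j) (hmem j).1 σ hγτ
  have hdisj : ((Finset.univ : Finset (Fin s)) : Set (Fin s)).PairwiseDisjoint P := by
    intro i _ j _ hij
    refine Finset.disjoint_left.mpr fun γ hγi hγj => ?_
    simp only [hP, Finset.mem_filter, Finset.mem_powerset] at hγi hγj
    rcases lt_or_gt_of_ne hij with h | h
    · exact (hshell j γ hγj.1).mp hγj.2 i h hγi.1
    · exact (hshell i γ hγi.1).mp hγi.2 j h hγj.1
  rw [hpart, Finset.sum_biUnion hdisj]
  refine Finset.sum_congr rfl fun j _ => ?_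
  -- inner sum
  have hScard : (τ j \ R j).card = d - (R j).card := by
    rw [Finset.card_sdiff_of_subset (hRsub j), (hmem j).2]
  rw [← hScard, ← lemA (τ j \ R j)]
  refine Finset.sum_nbij' (fun γ => γ \ R j) (fun β => R j ∪ β) ?_ ?_ ?_ ?_ ?_
  · intro γ hγ
    simp only [hP, Finset.mem_filter, Finset.mem_powerset] at hγ ⊢
    exact Finset.sdiff_subset_sdiff hγ.1 Finset.Subset.rfl
  · intro β hβ
    simp only [hP, Finset.mem_filter, Finset.mem_powerset] at hβ ⊢
    exact ⟨Finset.union_subset (hRsub j) (hβ.trans Finset.sdiff_subset),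
      Finset.subset_union_left⟩
  · intro γ hγ
    simp only [hP, Finset.mem_filter, Finset.mem_powerset] at hγ
    exact Finset.union_sdiff_of_subset hγ.2
  · intro β hβ
    simp only [Finset.mem_powerset] at hβ
    rw [Finset.union_sdiff_cancel_left (Finset.disjoint_right.mpr
      fun a ha => (Finset.mem_sdiff.mp (hβ ha)).2)]
  · intro γ hγ
    simp only [hP, Finset.mem_filter, Finset.mem_powerset] at hγ
    congr 1
    have h1 : γ.card = (R j).card + (γ \ R j).card := by
      rw [Finset.card_sdiff_of_subset hγ.2, Nat.add_sub_cancel' (Finset.card_le_card hγ.2)]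
    have h2 : γ.card ≤ d := (hmem j).2 ▸ Finset.card_le_card hγ.1
    have h3 : (γ \ R j).card ≤ (τ j \ R j).card :=
      Finset.card_le_card (Finset.sdiff_subset_sdiff hγ.1 Finset.Subset.rfl)
    omega
end

section
/- Listing the facets of Λ_d(V_1, ..., V_m, a) in reverse lexicographic order gives a shelling of Λ_d; moreover, for every facet τ, the restriction face R(τ) equals up(τ) ∪ tail(τ). -/
open Finset

variable {V : Type*} [Fintype V] [LinearOrder V]

/-- Facets of `Λ_d(V₁,…,V_m,a)`: `d`-subsets meeting the `i`-th color class in at most `a i`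
vertices.  The linear order `<` plays the role of the reverse of the listing order `≻`
(i.e. `v ≻ w ↔ v > w`). -/
def IsFacet (c : V → ℕ) (a : ℕ → ℕ) (m d : ℕ) (τ : Finset V) : Prop :=
  τ.card = d ∧ ∀ i ∈ Finset.range m, (τ.filter (fun v => c v = i)).card ≤ a i

/-- Reverse lexicographic order on equal-size subsets: `S ≻ T` iff the `≻`-least element of
the symmetric difference lies in `T`. -/
def RevGT (S T : Finset V) : Prop :=
  ∃ v ∈ T, v ∉ S ∧ ∀ w, w < v → (w ∈ S ↔ w ∈ T)

/-- `up(τ)`: vertices of `τ` lying in a full color class strictly after its first gap. -/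
def upF (c : V → ℕ) (a : ℕ → ℕ) (τ : Finset V) : Finset V :=
  τ.filter (fun v => (τ.filter (fun w => c w = c v)).card = a (c v) ∧
    ∃ g, c g = c v ∧ g ∉ τ ∧ v < g)

/-- `tail(τ)`: vertices of `τ` strictly after `Gap(τ)`, the first vertex lying neither in
`τ` nor in a full color class. -/
def tailF (c : V → ℕ) (a : ℕ → ℕ) (τ : Finset V) : Finset V :=
  τ.filter (fun v => ∃ g, g ∉ τ ∧ (τ.filter (fun w => c w = c g)).card < a (c g) ∧ v < g)

/-- Swap lemma: replacing `v ∈ τ` by a larger `g ∉ τ` (of the same color, or of a non-full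
color) produces a facet which is revlex-greater and contains `τ.erase v`. -/
lemma swap_facet (c : V → ℕ) (a : ℕ → ℕ) (m d : ℕ)
    (τ : Finset V) (hτ : IsFacet c a m d τ) (v g : V) (hv : v ∈ τ) (hg : g ∉ τ)
    (hvg : v < g)
    (hcase : c g = c v ∨ (τ.filter (fun w => c w = c g)).card < a (c g)) :
    IsFacet c a m d (insert g (τ.erase v)) ∧ RevGT (insert g (τ.erase v)) τ ∧
      τ.erase v ⊆ insert g (τ.erase v) := by
  have hge : g ∉ τ.erase v := fun h => hg (Finset.mem_of_mem_erase h)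
  have hd0 : 0 < d := hτ.1 ▸ Finset.card_pos.mpr ⟨v, hv⟩
  refine ⟨⟨?_, ?_⟩, ?_, Finset.subset_insert _ _⟩
  · rw [Finset.card_insert_of_notMem hge, Finset.card_erase_of_mem hv, hτ.1]
    omega
  · intro i hi
    have hle := hτ.2 i hi
    by_cases hgi : c g = i
    · rcases hcase with hcv | hlt
      · -- same color: the count is unchanged
        have hvi : c v = i := hcv ▸ hgi
        rw [Finset.filter_insert, if_pos hgi, Finset.filter_erase,
          Finset.card_insert_of_notMem (by simp [hg]),
          Finset.card_erase_of_mem (Finset.mem_filter.mpr ⟨hv, hvi⟩)]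
        have : 0 < (τ.filter (fun w => c w = i)).card :=
          Finset.card_pos.mpr ⟨v, Finset.mem_filter.mpr ⟨hv, hvi⟩⟩
        omega
      · rw [Finset.filter_insert, if_pos hgi, Finset.filter_erase]
        refine le_trans (Finset.card_insert_le _ _) ?_
        have hb := Finset.card_le_card (Finset.erase_subset v (τ.filter (fun w => c w = i)))
        rw [hgi] at hlt
        omega
    · rw [Finset.filter_insert, if_neg hgi, Finset.filter_erase]
      exact le_trans (Finset.card_le_card (Finset.erase_subset _ _)) hle
  · refine ⟨v, hv, ?_, ?_⟩
    · simp only [Finset.mem_insert, Finset.mem_erase]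
      push_neg
      exact ⟨ne_of_lt hvg, fun h => absurd rfl h⟩
    · intro w hw
      have hwg : w ≠ g := ne_of_lt (lt_trans hw hvg)
      have hwv : w ≠ v := ne_of_lt hw
      simp [Finset.mem_insert, Finset.mem_erase, hwg, hwv]

open Classical in
/-- Listing the facets of `Λ_d` in revlex order is a shelling, with restriction function
`R(τ) = up(τ) ∪ tail(τ)`. -/
theorem stmt1 (c : V → ℕ) (a : ℕ → ℕ) (m d : ℕ)
    (horder : ∀ v w : V, c v < c w → w < v)
    (hc : ∀ v : V, c v < m)
    (ha : ∀ i, i < m → 0 < a i ∧ a i ≤ (Finset.univ.filter (fun v : V => c v = i)).card)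
    (hd1 : 1 ≤ d) (hd2 : d ≤ ∑ i ∈ Finset.range m, a i) :
    ∀ τ : Finset V, IsFacet c a m d τ →
      (τ.filter (fun v => ∃ τ', IsFacet c a m d τ' ∧ RevGT τ' τ ∧ τ.erase v ⊆ τ')
          = upF c a τ ∪ tailF c a τ) ∧
      (∀ γ ⊆ τ, (upF c a τ ∪ tailF c a τ ⊆ γ ↔
          ∀ τ', IsFacet c a m d τ' → RevGT τ' τ → ¬ γ ⊆ τ')) := by
  intro τ hτ
  -- the construction from membership in up ∪ tail
  have construct : ∀ v ∈ upF c a τ ∪ tailF c a τ,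
      ∃ τ', IsFacet c a m d τ' ∧ RevGT τ' τ ∧ τ.erase v ⊆ τ' := by
    intro v hv
    rcases Finset.mem_union.mp hv with h | h
    · rw [upF, Finset.mem_filter] at h
      obtain ⟨hvτ, _, g, hgc, hgτ, hvg⟩ := h
      exact ⟨_, (swap_facet c a m d τ hτ v g hvτ hgτ hvg (Or.inl hgc)).1,
        (swap_facet c a m d τ hτ v g hvτ hgτ hvg (Or.inl hgc)).2⟩
    · rw [tailF, Finset.mem_filter] at h
      obtain ⟨hvτ, g, hgτ, hglt, hvg⟩ := h
      exact ⟨_, (swap_facet c a m d τ hτ v g hvτ hgτ hvg (Or.inr hglt)).1,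
        (swap_facet c a m d τ hτ v g hvτ hgτ hvg (Or.inr hglt)).2⟩
  constructor
  · apply Finset.ext
    intro v
    simp only [Finset.mem_filter]
    constructor
    · rintro ⟨hvτ, τ', hτ', ⟨u, huτ, huτ', hagree⟩, hsub⟩
      -- the revlex witness u must be v itself
      have huv : u = v := by
        by_contra hne
        exact huτ' (hsub (Finset.mem_erase.mpr ⟨hne, huτ⟩))
      subst huv
      -- τ' = insert g (τ.erase u) for a unique g ∉ τ, g > u
      have hcard : (τ' \ τ.erase u).card = 1 := by
        rw [Finset.card_sdiff_of_subset hsub, hτ'.1, Finset.card_erase_of_mem huτ, hτ.1]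
        have : 0 < d := hτ.1 ▸ Finset.card_pos.mpr ⟨u, huτ⟩
        omega
      obtain ⟨g, hgmem⟩ := Finset.card_eq_one.mp hcard
      have hgτ' : g ∈ τ' := by
        have : g ∈ τ' \ τ.erase u := hgmem ▸ Finset.mem_singleton_self g
        exact (Finset.mem_sdiff.mp this).1
      have hgne : g ∉ τ.erase u := by
        have : g ∈ τ' \ τ.erase u := hgmem ▸ Finset.mem_singleton_self g
        exact (Finset.mem_sdiff.mp this).2
      have hgu : g ≠ u := fun h => huτ' (h ▸ hgτ')
      have hgτ : g ∉ τ := fun h => hgne (Finset.mem_erase.mpr ⟨hgu, h⟩)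
      have hug : u < g := by
        rcases lt_or_gt_of_ne hgu with h | h
        · exact absurd ((hagree g h).mp hgτ') hgτ
        · exact h
      -- case split on fullness of the class of g
      by_cases hfull : (τ.filter (fun w => c w = c g)).card < a (c g)
      · exact Finset.mem_union_right _ (Finset.mem_filter.mpr ⟨hvτ, g, hgτ, hfull, hug⟩)
      · have heq : (τ.filter (fun w => c w = c g)).card = a (c g) :=
          le_antisymm (hτ.2 (c g) (Finset.mem_range.mpr (hc g))) (not_lt.mp hfull)
        -- then c g = c u, else τ' would violate the bound at color c g
        have hcgu : c g = c u := by
          by_contra hne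
          have hsub2 : insert g (τ.filter (fun w => c w = c g)) ⊆
              τ'.filter (fun w => c w = c g) := by
            intro x hx
            rcases Finset.mem_insert.mp hx with rfl | hx
            · exact Finset.mem_filter.mpr ⟨hgτ', rfl⟩
            · obtain ⟨hxτ, hxc⟩ := Finset.mem_filter.mp hx
              have hxu : x ≠ u := fun h => hne (h ▸ hxc ▸ rfl)
              exact Finset.mem_filter.mpr ⟨hsub (Finset.mem_erase.mpr ⟨hxu, hxτ⟩), hxc⟩
          have h1 : a (c g) + 1 ≤ (τ'.filter (fun w => c w = c g)).card := by
            have := Finset.card_le_card hsub2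
            rwa [Finset.card_insert_of_notMem (by simp [hgτ]), heq] at this
          have h2 := hτ'.2 (c g) (Finset.mem_range.mpr (hc g))
          omega
        exact Finset.mem_union_left _ (Finset.mem_filter.mpr
          ⟨hvτ, by rw [← hcgu]; exact heq, g, hcgu, hgτ, hug⟩)
    · intro hv
      obtain ⟨τ', h1, h2, h3⟩ := construct v hv
      have hvτ : v ∈ τ := by
        rcases Finset.mem_union.mp hv with h | h
        · exact Finset.mem_of_mem_filter v h
        · exact Finset.mem_of_mem_filter v h
      exact ⟨hvτ, τ', h1, h2, h3⟩
  · intro γ hγτ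
    constructor
    · -- the hard direction: counting argument
      rintro hsub τ' hτ' ⟨u, huτ, huτ', hagree⟩ hγτ'
      have huγ : u ∉ γ := fun h => huτ' (hγτ' h)
      have hu_up : u ∉ upF c a τ := fun h =>
        huγ (hsub (Finset.mem_union_left _ h))
      have hu_tail : u ∉ tailF c a τ := fun h =>
        huγ (hsub (Finset.mem_union_right _ h))
      set A := τ \ τ' with hA
      set B := τ' \ τ with hB
      -- facts about elements of B
      have hBgt : ∀ x ∈ B, u < x := by
        intro x hx
        obtain ⟨hxτ', hxτ⟩ := Finset.mem_sdiff.mp hx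
        have hxu : x ≠ u := fun h => huτ' (h ▸ hxτ')
        rcases lt_or_gt_of_ne hxu with h | h
        · exact absurd ((hagree x h).mp hxτ') hxτ
        · exact h
      have hBfull : ∀ x ∈ B, (τ.filter (fun w => c w = c x)).card = a (c x) := by
        intro x hx
        obtain ⟨hxτ', hxτ⟩ := Finset.mem_sdiff.mp hx
        by_contra hne
        have hlt : (τ.filter (fun w => c w = c x)).card < a (c x) :=
          lt_of_le_of_ne (hτ.2 (c x) (Finset.mem_range.mpr (hc x))) hne
        exact hu_tail (Finset.mem_filter.mpr ⟨huτ, x, hxτ, hlt, hBgt x hx⟩)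
      have hBcol : ∀ x ∈ B, c x ≠ c u := by
        intro x hx hcx
        obtain ⟨hxτ', hxτ⟩ := Finset.mem_sdiff.mp hx
        have hfull := hBfull x hx
        rw [hcx] at hfull
        refine hu_up (Finset.mem_filter.mpr ⟨huτ, ?_, x, hcx, hxτ, hBgt x hx⟩)
        convert hfull using 2
      -- cardinalities: |A| = |B|
      have hABcard : A.card = B.card := by
        have h1 : (τ ∩ τ').card + A.card = τ.card := by
          rw [hA, Finset.card_inter_add_card_sdiff]
        have h2 : (τ' ∩ τ).card + B.card = τ'.card := by
          rw [hB, Finset.card_inter_add_card_sdiff]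
        rw [Finset.inter_comm] at h2
        rw [hτ.1] at h1; rw [hτ'.1] at h2
        omega
      -- per-color inequality
      have hper : ∀ i ∈ Finset.range m,
          (B.filter (fun x => c x = i)).card ≤ (A.filter (fun x => c x = i)).card := by
        intro i _
        rcases Finset.eq_empty_or_nonempty (B.filter (fun x => c x = i)) with he | ⟨x, hx⟩
        · simp [he]
        · obtain ⟨hxB, hxi⟩ := Finset.mem_filter.mp hx
          have hfull : (τ.filter (fun w => c w = i)).card = a i := by
            have := hBfull x hxB
            rwa [hxi] at this
          have hτ'le : (τ'.filter (fun w => c w = i)).card ≤ a i := by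
            apply hτ'.2
            rw [← hxi]
            exact Finset.mem_range.mpr (hc x)
          -- decompose filters
          have hdecτ : (τ.filter (fun w => c w = i)).card =
              (A.filter (fun w => c w = i)).card +
              ((τ ∩ τ').filter (fun w => c w = i)).card := by
            conv_lhs => rw [← Finset.sdiff_union_inter τ τ']
            rw [Finset.filter_union, Finset.card_union_of_disjoint
              (Finset.disjoint_filter_filter (Finset.disjoint_sdiff_inter τ τ'))]
          have hdecτ' : (τ'.filter (fun w => c w = i)).card =
              (B.filter (fun w => c w = i)).card +
              ((τ' ∩ τ).filter (fun w => c w = i)).card := by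
            conv_lhs => rw [← Finset.sdiff_union_inter τ' τ]
            rw [Finset.filter_union, Finset.card_union_of_disjoint
              (Finset.disjoint_filter_filter (Finset.disjoint_sdiff_inter τ' τ))]
          have hcomm : ((τ' ∩ τ).filter (fun w => c w = i)).card =
              ((τ ∩ τ').filter (fun w => c w = i)).card := by
            rw [Finset.inter_comm]
          omega
      -- strict inequality at color c u
      have hstrict : (B.filter (fun x => c x = c u)).card <
          (A.filter (fun x => c x = c u)).card := by
        have hBe : B.filter (fun x => c x = c u) = ∅ :=
          Finset.filter_eq_empty_iff.mpr (fun x hx => hBcol x hx)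
        have hAu : u ∈ A.filter (fun x => c x = c u) :=
          Finset.mem_filter.mpr ⟨Finset.mem_sdiff.mpr ⟨huτ, huτ'⟩, rfl⟩
        rw [hBe]
        exact Finset.card_pos.mpr ⟨u, hAu⟩
      -- summing up gives |B| < |A|, contradiction
      have hsumB : B.card = ∑ i ∈ Finset.range m, (B.filter (fun x => c x = i)).card :=
        Finset.card_eq_sum_card_fiberwise (fun x _ => Finset.mem_range.mpr (hc x))
      have hsumA : A.card = ∑ i ∈ Finset.range m, (A.filter (fun x => c x = i)).card :=
        Finset.card_eq_sum_card_fiberwise (fun x _ => Finset.mem_range.mpr (hc x))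
      have hlt : B.card < A.card := by
        rw [hsumA, hsumB]
        exact Finset.sum_lt_sum hper ⟨c u, Finset.mem_range.mpr (hc u), hstrict⟩
      omega
    · intro h
      intro v hv
      by_contra hvγ
      obtain ⟨τ', h1, h2, h3⟩ := construct v hv
      refine h τ' h1 h2 (fun x hx => h3 ?_)
      have hxv : x ≠ v := fun he => hvγ (he ▸ hx)
      exact Finset.mem_erase.mpr ⟨hxv, hγτ hx⟩
end

section
/- No facet τ' of Λ_d with τ' ≻ τ in reverse lexicographic order contains the set up(τ) ∪ tail(τ). -/
open Finset

variable {V : Type*} [Fintype V] [LinearOrder V]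

/-- No facet `τ'` of `Λ_d` with `τ' ≻ τ` in revlex order contains `up(τ) ∪ tail(τ)`. -/
theorem stmt3 (c : V → ℕ) (a : ℕ → ℕ) (m d : ℕ)
    (horder : ∀ v w : V, c v < c w → w < v)
    (hc : ∀ v : V, c v < m)
    (ha : ∀ i, i < m → 0 < a i ∧ a i ≤ (Finset.univ.filter (fun v : V => c v = i)).card)
    (hd1 : 1 ≤ d) (hd2 : d ≤ ∑ i ∈ Finset.range m, a i) :
    ∀ τ τ' : Finset V, IsFacet c a m d τ → IsFacet c a m d τ' → RevGT τ' τ →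
      ¬ (upF c a τ ∪ tailF c a τ ⊆ τ') := by
  rintro τ τ' ⟨hcard, hbound⟩ ⟨hcard', hbound'⟩ ⟨v, hvτ, hvτ', hagree⟩ hsub
  -- Every gap of τ above v has a full color class in τ
  have hfull : ∀ g, g ∉ τ → v < g →
      (τ.filter (fun w => c w = c g)).card = a (c g) := by
    intro g hg hvg
    have hle := hbound (c g) (Finset.mem_range.2 (hc g))
    refine le_antisymm hle ?_
    by_contra h
    push_neg at h
    have hvtail : v ∈ tailF c a τ :=
      Finset.mem_filter.2 ⟨hvτ, g, hg, h, hvg⟩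
    exact hvτ' (hsub (Finset.mem_union_right _ hvtail))
  -- Every element of τ' \ τ is above v
  have hgv : ∀ g ∈ τ', g ∉ τ → v < g := by
    intro g hg' hg
    rcases lt_trichotomy g v with h | h | h
    · exact absurd ((hagree g h).1 hg') hg
    · exact absurd (h ▸ hg') hvτ'
    · exact h
  -- Each color class of τ' is at most as big as that of τ
  have hBA : ∀ i, (τ'.filter (fun w => c w = i)).card ≤
      (τ.filter (fun w => c w = i)).card := by
    intro i
    by_contra h
    push_neg at h
    have hns : ¬ (τ'.filter (fun w => c w = i) ⊆ τ.filter (fun w => c w = i)) :=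
      fun hs => absurd (Finset.card_le_card hs) (not_le.2 h)
    obtain ⟨g, hgB, hgA⟩ := Finset.not_subset.1 hns
    obtain ⟨hgτ', hcg⟩ := Finset.mem_filter.1 hgB
    have hgτ : g ∉ τ := fun hh => hgA (Finset.mem_filter.2 ⟨hh, hcg⟩)
    have hful := hfull g hgτ (hgv g hgτ' hgτ)
    have h2 := hbound' (c g) (Finset.mem_range.2 (hc g))
    rw [hcg] at hful h2
    omega
  -- Sums of color class sizes both equal d
  have hsumA : ∑ i ∈ Finset.range m, (τ.filter (fun w => c w = i)).card = d := by
    rw [← hcard]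
    exact (Finset.card_eq_sum_card_fiberwise (fun v _ => Finset.mem_range.2 (hc v))).symm
  have hsumB : ∑ i ∈ Finset.range m, (τ'.filter (fun w => c w = i)).card = d := by
    rw [← hcard']
    exact (Finset.card_eq_sum_card_fiberwise (fun v _ => Finset.mem_range.2 (hc v))).symm
  have heq : ∀ i ∈ Finset.range m,
      (τ'.filter (fun w => c w = i)).card = (τ.filter (fun w => c w = i)).card :=
    (Finset.sum_eq_sum_iff_of_le (fun i _ => hBA i)).1 (by rw [hsumA, hsumB])
  -- Focus on the color of v
  have hj := heq (c v) (Finset.mem_range.2 (hc v))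
  have hvA : v ∈ τ.filter (fun w => c w = c v) := Finset.mem_filter.2 ⟨hvτ, rfl⟩
  have hvB : v ∉ τ'.filter (fun w => c w = c v) :=
    fun h => hvτ' (Finset.mem_filter.1 h).1
  have hns : ¬ (τ'.filter (fun w => c w = c v) ⊆ τ.filter (fun w => c w = c v)) := by
    intro hs
    have hsub2 : τ'.filter (fun w => c w = c v) ⊆ (τ.filter (fun w => c w = c v)).erase v :=
      fun x hx => Finset.mem_erase.2 ⟨fun he => hvB (he ▸ hx), hs hx⟩
    have hle2 := Finset.card_le_card hsub2
    rw [Finset.card_erase_of_mem hvA] at hle2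
    have hpos : 0 < (τ.filter (fun w => c w = c v)).card := Finset.card_pos.2 ⟨v, hvA⟩
    omega
  obtain ⟨g, hgB, hgA⟩ := Finset.not_subset.1 hns
  obtain ⟨hgτ', hcg⟩ := Finset.mem_filter.1 hgB
  have hgτ : g ∉ τ := fun hh => hgA (Finset.mem_filter.2 ⟨hh, hcg⟩)
  have hlt := hgv g hgτ' hgτ
  have hful := hfull g hgτ hlt
  rw [hcg] at hful
  have hvup : v ∈ upF c a τ :=
    Finset.mem_filter.2 ⟨hvτ, hful, g, hcg, hgτ, hlt⟩
  exact hvτ' (hsub (Finset.mem_union_left _ hvup))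
end

section
/- With φ as above, if τ and τ' are a-subsets of V with τ' ≻ τ in revlex order and deg(φ(τ')) ≤ deg(φ(τ)), then there exists a divisor μ'' of φ(τ) with deg(μ'') = deg(φ(τ')) and φ(τ') ⪰ μ'' in the revlex order on monomials. -/
open Finset

/-- The map `φ` (0-based encoding of the ordered set `V = {v_1 ≻ v_2 ≻ ⋯}`; the produced
multiset consists of 1-based variable indices, where `x_1 ≻ x_2 ≻ ⋯`). -/
def phiMap (τ : Finset ℕ) : Multiset ℕ :=
  ↑(((τ.sort (· ≤ ·)).zipIdx.map (fun p => p.1 - p.2)).filter (fun x => x ≠ 0))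

/-- Revlex order on equal-size subsets (in the index encoding, a smaller index means an
`≻`-larger element, so the `≻`-least element of the symmetric difference is the one with the
largest index): `S ≻ T` iff that element lies in `T`. -/
def RevGTN (S T : Finset ℕ) : Prop :=
  ∃ v ∈ T, v ∉ S ∧ ∀ w, v < w → (w ∈ S ↔ w ∈ T)

/-- Revlex order on equal-degree monomials (multisets of variable indices): `μ ≻ ν` iff at
the `≻`-least variable where they differ (largest index), `μ` has the smaller exponent. -/
def MonRevGT (μ ν : Multiset ℕ) : Prop :=
  ∃ x, μ.count x < ν.count x ∧ ∀ y, x < y → μ.count y = ν.count y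

/-! ### Auxiliary definitions and lemmas -/

/-- The list of values `l[i] - (s + i)`. -/
def dlist (l : List ℕ) (s : ℕ) : List ℕ :=
  (l.zipIdx s).map (fun p => p.1 - p.2)

lemma dlist_length (l : List ℕ) (s : ℕ) : (dlist l s).length = l.length := by
  simp [dlist]

lemma dlist_append (l₁ l₂ : List ℕ) (s : ℕ) :
    dlist (l₁ ++ l₂) s = dlist l₁ s ++ dlist l₂ (s + l₁.length) := by
  simp [dlist, List.zipIdx_append]

lemma dlist_getElem (l : List ℕ) (s i : ℕ) (h : i < l.length) :
    (dlist l s)[i]'(by rw [dlist_length]; exact h) = l[i] - (s + i) := by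
  simp [dlist, List.getElem_zipIdx]

lemma mem_dlist {x : ℕ} {l : List ℕ} {s : ℕ} :
    x ∈ dlist l s ↔ ∃ i, ∃ h : i < l.length, x = l[i] - (s + i) := by
  constructor
  · intro hx
    obtain ⟨i, hi, hix⟩ := List.mem_iff_getElem.mp hx
    rw [dlist_length] at hi
    exact ⟨i, hi, by rw [← hix, dlist_getElem]⟩
  · rintro ⟨i, hi, rfl⟩
    have := dlist_getElem l s i hi
    rw [← this]
    exact List.getElem_mem _

/-- For a strictly sorted list of naturals, `l[i] + (j - i) ≤ l[j]`. -/
lemma sorted_lt_getElem_add {l : List ℕ} (hl : List.Pairwise (· < ·) l) {i j : ℕ}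
    (hij : i ≤ j) (hj : j < l.length) : l[i]'(lt_of_le_of_lt hij hj) + (j - i) ≤ l[j] := by
  have hp := List.pairwise_iff_getElem.mp hl
  have H : ∀ d i, (hd : i + d < l.length) → l[i]'(by omega) + d ≤ l[i + d]'hd := by
    intro d
    induction d with
    | zero => intro i h; simp
    | succ d ih =>
      intro i h
      have h1 := ih i (by omega)
      have h2 : l[i + d]'(by omega) < l[i + (d + 1)]'(by omega) :=
        hp (i + d) (i + (d + 1)) (by omega) (by omega) (by omega)
      omega
  have := H (j - i) i (by omega)
  have hji : i + (j - i) = j := by omega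
  simp only [hji] at this
  exact this

/-- A sorted list of a finset splits as the sorted lists of the two filter parts. -/
lemma sort_filter_split (τ : Finset ℕ) (v : ℕ) :
    τ.sort (· ≤ ·) =
      (τ.filter (fun u => u ≤ v)).sort (· ≤ ·) ++
        (τ.filter (fun u => ¬ u ≤ v)).sort (· ≤ ·) := by
  refine (fun hp h2 => List.Perm.eq_of_pairwise' (Finset.pairwise_sort _ _) h2 hp) ?_ ?_
  · apply Multiset.coe_eq_coe.mp
    rw [← Multiset.coe_add, Finset.sort_eq, Finset.sort_eq, Finset.sort_eq,
      Finset.filter_val, Finset.filter_val, Multiset.filter_add_not]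
  · rw [List.pairwise_append]
    refine ⟨Finset.pairwise_sort _ _, Finset.pairwise_sort _ _, ?_⟩
    intro x hx y hy
    rw [Finset.mem_sort, Finset.mem_filter] at hx hy
    have := hx.2
    have := hy.2
    omega

lemma multiset_exists_le_card (s : Multiset ℕ) (k : ℕ) (hk : k ≤ Multiset.card s) :
    ∃ t, t ≤ s ∧ Multiset.card t = k := by
  refine ⟨↑(s.toList.take k), ?_, ?_⟩
  · calc (↑(s.toList.take k) : Multiset ℕ) ≤ ↑s.toList :=
          Multiset.coe_le.mpr (List.take_sublist _ _).subperm
      _ = s := s.coe_toList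
  · rw [Multiset.coe_card, List.length_take, Multiset.length_toList]
    omega

lemma getElem_sort_mem {s : Finset ℕ} {l : List ℕ} (hl : l = s.sort (· ≤ ·)) {i : ℕ}
    (h : i < l.length) : l[i] ∈ s := by
  subst hl
  exact (Finset.mem_sort (α := ℕ) (· ≤ ·)).mp (List.getElem_mem h)

/-- If `τ' ≻ τ` are `a`-subsets of `V` and `deg φ(τ') ≤ deg φ(τ)`, then `φ(τ)` has a divisor
`μ''` with `deg μ'' = deg φ(τ')` and `φ(τ') ⪰ μ''` in revlex. -/
theorem stmt5 (n a : ℕ) (ha : 1 ≤ a) (han : a ≤ n)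
    (τ τ' : Finset ℕ) (hτ : τ ⊆ Finset.range n) (hτ' : τ' ⊆ Finset.range n)
    (hca : τ.card = a) (hca' : τ'.card = a)
    (hgt : RevGTN τ' τ)
    (hdeg : Multiset.card (phiMap τ') ≤ Multiset.card (phiMap τ)) :
    ∃ μ'' : Multiset ℕ, μ'' ≤ phiMap τ ∧
      Multiset.card μ'' = Multiset.card (phiMap τ') ∧
      (phiMap τ' = μ'' ∨ MonRevGT (phiMap τ') μ'') := by
  classical
  obtain ⟨v, hvτ, hvτ', hagree⟩ := hgt
  obtain ⟨τ₁, hτ₁⟩ : ∃ s, s = τ.filter (fun u => u ≤ v) := ⟨_, rfl⟩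
  obtain ⟨τ₂, hτ₂⟩ : ∃ s, s = τ.filter (fun u => ¬ u ≤ v) := ⟨_, rfl⟩
  obtain ⟨σ₁, hσ₁⟩ : ∃ s, s = τ'.filter (fun u => u ≤ v) := ⟨_, rfl⟩
  obtain ⟨σ₂, hσ₂⟩ : ∃ s, s = τ'.filter (fun u => ¬ u ≤ v) := ⟨_, rfl⟩
  have hτ₂σ₂ : σ₂ = τ₂ := by
    rw [hσ₂, hτ₂]
    ext w
    simp only [Finset.mem_filter, not_le]
    constructor
    · rintro ⟨hw, hv⟩; exact ⟨(hagree w hv).mp hw, hv⟩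
    · rintro ⟨hw, hv⟩; exact ⟨(hagree w hv).mpr hw, hv⟩
  obtain ⟨A, hA⟩ : ∃ l, l = τ₁.sort (· ≤ ·) := ⟨_, rfl⟩
  obtain ⟨A', hA'⟩ : ∃ l, l = σ₁.sort (· ≤ ·) := ⟨_, rfl⟩
  obtain ⟨B, hB⟩ : ∃ l, l = τ₂.sort (· ≤ ·) := ⟨_, rfl⟩
  have hsplit : τ.sort (· ≤ ·) = A ++ B := by
    rw [hA, hB, hτ₁, hτ₂]; exact sort_filter_split τ v
  have hsplit' : τ'.sort (· ≤ ·) = A' ++ B := by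
    rw [hA', hB, ← hτ₂σ₂, hσ₁, hσ₂]; exact sort_filter_split τ' v
  obtain ⟨k, hk⟩ : ∃ k, k = A.length := ⟨_, rfl⟩
  have hkcard : k = τ₁.card := by rw [hk, hA, Finset.length_sort]
  have hlenA' : A'.length = σ₁.card := by rw [hA', Finset.length_sort]
  have hcards : σ₁.card = τ₁.card := by
    have h1 : τ₁.card + τ₂.card = τ.card := by
      rw [hτ₁, hτ₂]; exact Finset.card_filter_add_card_filter_not _
    have h2 : σ₁.card + σ₂.card = τ'.card := by
      rw [hσ₁, hσ₂]; exact Finset.card_filter_add_card_filter_not _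
    rw [hτ₂σ₂] at h2
    omega
  have hk' : A'.length = k := by omega
  have hvτ₁ : v ∈ τ₁ := by rw [hτ₁]; exact Finset.mem_filter.mpr ⟨hvτ, le_rfl⟩
  have hk1 : 1 ≤ k := by
    have := Finset.card_pos.mpr ⟨v, hvτ₁⟩
    omega
  have hkv : k ≤ v := by
    have hsub : σ₁ ⊆ Finset.range v := by
      rw [hσ₁]
      intro w hw
      rw [Finset.mem_filter] at hw
      rw [Finset.mem_range]
      rcases Nat.lt_or_ge w v with h | h
      · exact h
      · exact absurd (le_antisymm hw.2 h ▸ hw.1) hvτ'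
    have h1 := Finset.card_le_card hsub
    rw [Finset.card_range] at h1
    omega
  have hdl : ((τ.sort (· ≤ ·)).zipIdx.map (fun p => p.1 - p.2)) = dlist A 0 ++ dlist B k := by
    rw [hsplit]
    show dlist (A ++ B) 0 = _
    rw [dlist_append, Nat.zero_add, ← hk]
  have hdl' : ((τ'.sort (· ≤ ·)).zipIdx.map (fun p => p.1 - p.2)) = dlist A' 0 ++ dlist B k := by
    rw [hsplit']
    show dlist (A' ++ B) 0 = _
    rw [dlist_append, Nat.zero_add, hk']
  obtain ⟨MA, hMA⟩ : ∃ s : Multiset ℕ, s = ↑((dlist A 0).filter (fun x => x ≠ 0)) := ⟨_, rfl⟩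
  obtain ⟨MA', hMA'⟩ : ∃ s : Multiset ℕ, s = ↑((dlist A' 0).filter (fun x => x ≠ 0)) := ⟨_, rfl⟩
  obtain ⟨C, hC⟩ : ∃ s : Multiset ℕ, s = ↑((dlist B k).filter (fun x => x ≠ 0)) := ⟨_, rfl⟩
  have hphi : phiMap τ = MA + C := by
    rw [phiMap, hdl, List.filter_append, hMA, hC, Multiset.coe_add]
  have hphi' : phiMap τ' = MA' + C := by
    rw [phiMap, hdl', List.filter_append, hMA', hC, Multiset.coe_add]
  obtain ⟨D, hD⟩ : ∃ d, d = v - k + 1 := ⟨_, rfl⟩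
  obtain ⟨m, hm⟩ : ∃ m, m = Multiset.card MA' := ⟨_, rfl⟩
  obtain ⟨p, hp⟩ : ∃ p, p = Multiset.card MA := ⟨_, rfl⟩
  have hmp : m ≤ p := by
    rw [hphi, hphi', Multiset.card_add, Multiset.card_add] at hdeg
    omega
  have hAsorted : List.Pairwise (· < ·) A := by rw [hA]; exact (Finset.sortedLT_sort τ₁).pairwise
  have hA'sorted : List.Pairwise (· < ·) A' := by rw [hA']; exact (Finset.sortedLT_sort σ₁).pairwise
  have hAle : ∀ x ∈ A, x ≤ v := by
    intro x hx
    rw [hA, Finset.mem_sort (α := ℕ) (· ≤ ·), hτ₁, Finset.mem_filter] at hx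
    exact hx.2
  have hA'lt : ∀ x ∈ A', x < v := by
    intro x hx
    rw [hA', Finset.mem_sort (α := ℕ) (· ≤ ·), hσ₁, Finset.mem_filter] at hx
    rcases Nat.lt_or_ge x v with h | h
    · exact h
    · exact absurd (le_antisymm hx.2 h ▸ hx.1) hvτ'
  -- the last element of A is v
  have hAlast : A[k - 1]'(by omega) = v := by
    have hvA : v ∈ A := by rw [hA]; exact (Finset.mem_sort (α := ℕ) (· ≤ ·)).mpr hvτ₁
    obtain ⟨i, hi, hiv⟩ := List.mem_iff_getElem.mp hvA
    have h1 := sorted_lt_getElem_add hAsorted (by omega : i ≤ k - 1) (by omega : k - 1 < A.length)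
    have h2 : A[k - 1]'(by omega) ≤ v := hAle _ (List.getElem_mem _)
    omega
  have hDmem : D ∈ MA := by
    rw [hMA, Multiset.mem_coe, List.mem_filter]
    refine ⟨mem_dlist.mpr ⟨k - 1, by omega, ?_⟩, by simp only [decide_eq_true_eq]; omega⟩
    rw [hAlast]
    omega
  have hle_MA : ∀ x ∈ MA, x ≤ D := by
    intro x hx
    rw [hMA, Multiset.mem_coe, List.mem_filter] at hx
    obtain ⟨i, hi, hix⟩ := mem_dlist.mp hx.1
    have h1 := sorted_lt_getElem_add hAsorted (by omega : i ≤ k - 1) (by omega : k - 1 < A.length)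
    rw [hAlast] at h1
    omega
  have hlt_MA' : ∀ x ∈ MA', x < D := by
    intro x hx
    rw [hMA', Multiset.mem_coe, List.mem_filter] at hx
    obtain ⟨i, hi, hix⟩ := mem_dlist.mp hx.1
    have h1 := sorted_lt_getElem_add hA'sorted (by omega : i ≤ k - 1) (by omega : k - 1 < A'.length)
    have h2 : A'[k - 1]'(by omega) < v := hA'lt _ (List.getElem_mem _)
    omega
  rcases Nat.eq_zero_or_pos m with hm0 | hm1
  · -- degenerate case : MA' = 0
    have hMA'0 : MA' = 0 := Multiset.card_eq_zero.mp (by omega)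
    refine ⟨C, ?_, ?_, Or.inl ?_⟩
    · rw [hphi]; exact Multiset.le_add_left C MA
    · rw [hphi', hMA'0, zero_add]
    · rw [hphi', hMA'0, zero_add]
  · -- main case
    have hcardE : Multiset.card (MA.erase D) = p - 1 := by
      rw [Multiset.card_erase_of_mem hDmem, Nat.pred_eq_sub_one]
      omega
    obtain ⟨L₀, hL₀le, hL₀card⟩ := multiset_exists_le_card (MA.erase D) (m - 1) (by omega)
    refine ⟨(D ::ₘ L₀) + C, ?_, ?_, Or.inr ?_⟩
    · rw [hphi]
      exact add_le_add_left
        (le_trans (Multiset.cons_le_cons D hL₀le) (le_of_eq (Multiset.cons_erase hDmem))) C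
    · rw [hphi', Multiset.card_add, Multiset.card_add, Multiset.card_cons, hL₀card]
      omega
    · rw [hphi']
      refine ⟨D, ?_, ?_⟩
      · rw [Multiset.count_add, Multiset.count_add, Multiset.count_cons_self]
        have h1 : Multiset.count D MA' = 0 :=
          Multiset.count_eq_zero.mpr (fun h => absurd (hlt_MA' D h) (lt_irrefl D))
        omega
      · intro y hy
        rw [Multiset.count_add, Multiset.count_add]
        have h1 : Multiset.count y MA' = 0 :=
          Multiset.count_eq_zero.mpr (fun h => absurd (hlt_MA' y h) (by omega))
        have h2 : Multiset.count y (D ::ₘ L₀) = 0 := by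
          apply Multiset.count_eq_zero.mpr
          intro h
          rw [Multiset.mem_cons] at h
          rcases h with h | h
          · omega
          · have hyMA : y ∈ MA :=
              Multiset.mem_of_le (le_trans hL₀le (Multiset.erase_le D MA)) h
            have := hle_MA y hyMA
            omega
        omega
end

section
/- Let M be a multicomplex in S_d(X,(∞,a)) and 1 ≤ i ≤ m. For ν a monomial supported in X − (X_0 ∪ X_i) belonging to M(i) := {μ restricted to X−(X_0∪X_i) : μ ∈ M}, let M_ν = {monomials μ on X_0∪X_i : μν ∈ M}, and let M'_ν be the set consisting of the revlex-first F_j(M_ν) monomials of degree j in S_d(X_0∪X_i, a_i) for each j. Then C_i(M) := ∪_{ν ∈ M(i)} M'_ν · ν is a multicomplex. -/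
open Finset

variable {X : Type*} [Fintype X] [LinearOrder X]

def degM (μ : X →₀ ℕ) : ℕ := ∑ x, μ x

def degC (c : X → ℕ) (i : ℕ) (μ : X →₀ ℕ) : ℕ :=
  ∑ x ∈ Finset.univ.filter (fun x => c x = i), μ x

/-- Revlex comparison of the parts supported on `{x | P x}` (`≻` on variables is `>`). -/
def MonRevGTOn (P : X → Prop) (μ ν : X →₀ ℕ) : Prop :=
  ∃ x, P x ∧ μ x < ν x ∧ ∀ y, P y → y < x → μ y = ν y

def FVec (M : Finset (X →₀ ℕ)) (j : ℕ) : ℕ := (M.filter (fun μ => degM μ = j)).card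

/-- The part of a monomial supported outside `X₀ ∪ X_i`. -/
noncomputable def outp (c : X → ℕ) (i : ℕ) (μ : X →₀ ℕ) : X →₀ ℕ :=
  Finsupp.equivFunOnFinite.symm (fun x => if c x ≠ 0 ∧ c x ≠ i then μ x else 0)

/-- The part of a monomial supported in `X₀ ∪ X_i`. -/
noncomputable def innp (c : X → ℕ) (i : ℕ) (μ : X →₀ ℕ) : X →₀ ℕ :=
  Finsupp.equivFunOnFinite.symm (fun x => if c x = 0 ∨ c x = i then μ x else 0)

lemma degM_mono' {μ ν : X →₀ ℕ} (h : ∀ x, μ x ≤ ν x) : degM μ ≤ degM ν :=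
  Finset.sum_le_sum fun x _ => h x

lemma degC_mono' (c : X → ℕ) (i : ℕ) {μ ν : X →₀ ℕ} (h : ∀ x, μ x ≤ ν x) :
    degC c i μ ≤ degC c i ν :=
  Finset.sum_le_sum fun x _ => h x

open Classical in
lemma revlex_trichot {P : X → Prop} {μ ν : X →₀ ℕ}
    (hμ : ∀ x, ¬ P x → μ x = 0) (hν : ∀ x, ¬ P x → ν x = 0) (hne : μ ≠ ν) :
    MonRevGTOn P μ ν ∨ MonRevGTOn P ν μ := by
  classical
  have hS : (Finset.univ.filter (fun x => μ x ≠ ν x)).Nonempty := by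
    by_contra h
    apply hne
    ext x
    by_contra hx
    exact h ⟨x, Finset.mem_filter.2 ⟨Finset.mem_univ x, hx⟩⟩
  set S := Finset.univ.filter (fun x => μ x ≠ ν x) with hSdef
  set x := S.min' hS with hxdef
  have hxS : x ∈ S := S.min'_mem hS
  have hxne : μ x ≠ ν x := (Finset.mem_filter.1 hxS).2
  have hPx : P x := by
    by_contra hP
    exact hxne (by rw [hμ x hP, hν x hP])
  have hbelow : ∀ y, P y → y < x → μ y = ν y := by
    intro y _ hy
    by_contra hyne
    exact absurd (S.min'_le y (Finset.mem_filter.2 ⟨Finset.mem_univ y, hyne⟩)) (not_le.2 hy)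
  have hbelow' : ∀ y, P y → y < x → ν y = μ y := fun y hy hyx => (hbelow y hy hyx).symm
  rcases lt_or_gt_of_ne hxne with h | h
  · exact Or.inl ⟨x, hPx, h, hbelow⟩
  · exact Or.inr ⟨x, hPx, h, hbelow'⟩

open Classical in
/-- `C_i(M) = ⋃_{ν ∈ M(i)} M'_ν · ν` is a multicomplex.  Here `Comp ν` plays the role of the
compressed fiber `M'_ν`: for each `ν ∈ M(i)` it is the revlex initial segment of
`S_d(X₀ ∪ X_i, a_i)` with the same F-vector as the fiber `M_ν`; by Mermin–Peeva it is itself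
divisibility-closed (hypothesis `hComp4`). -/
theorem stmt7 (c : X → ℕ) (a : ℕ → ℕ) (m d i : ℕ)
    (hm : ∀ x, c x ≤ m) (horder : ∀ x y : X, c x < c y → y < x)
    (hi1 : 1 ≤ i) (him : i ≤ m)
    (M : Finset (X →₀ ℕ))
    (hMS : ∀ μ ∈ M, degM μ ≤ d ∧ ∀ t, 1 ≤ t → t ≤ m → degC c t μ ≤ a t)
    (hMdc : ∀ μ ∈ M, ∀ ν : X →₀ ℕ, (∀ x, ν x ≤ μ x) → ν ∈ M)
    (Comp : (X →₀ ℕ) → Finset (X →₀ ℕ))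
    -- each `Comp ν` consists of monomials of the ambient `S_d(X₀ ∪ X_i, a_i)` fitting `ν`
    (hComp1 : ∀ ν ∈ M.image (outp c i), ∀ μ ∈ Comp ν,
      (∀ x, ¬ (c x = 0 ∨ c x = i) → μ x = 0) ∧ degM μ + degM ν ≤ d ∧ degC c i μ ≤ a i)
    -- each `Comp ν` is a revlex initial segment in each degree
    (hComp2 : ∀ ν ∈ M.image (outp c i), ∀ μ ∈ Comp ν, ∀ μ' : X →₀ ℕ,
      (∀ x, ¬ (c x = 0 ∨ c x = i) → μ' x = 0) → degM μ' = degM μ →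
      degM μ' + degM ν ≤ d → degC c i μ' ≤ a i →
      MonRevGTOn (fun x => c x = 0 ∨ c x = i) μ' μ → μ' ∈ Comp ν)
    -- `Comp ν` has the same F-vector as the fiber `M_ν`
    (hComp3 : ∀ ν ∈ M.image (outp c i), ∀ j,
      FVec (Comp ν) j = FVec ((M.filter (fun μ => outp c i μ = ν)).image (innp c i)) j)
    -- Mermin–Peeva: each compressed fiber is a multicomplex
    (hComp4 : ∀ ν ∈ M.image (outp c i), ∀ μ ∈ Comp ν, ∀ μ' : X →₀ ℕ,
      (∀ x, μ' x ≤ μ x) → μ' ∈ Comp ν) :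
    ∀ ρ ∈ (M.image (outp c i)).biUnion (fun ν => (Comp ν).image (fun μ => μ + ν)),
      ∀ ρ' : X →₀ ℕ, (∀ x, ρ' x ≤ ρ x) →
        ρ' ∈ (M.image (outp c i)).biUnion (fun ν => (Comp ν).image (fun μ => μ + ν)) := by
  classical
  intro ρ hρ ρ' hle
  rw [Finset.mem_biUnion] at hρ
  obtain ⟨ν, hν, hρ2⟩ := hρ
  rw [Finset.mem_image] at hρ2
  obtain ⟨μ, hμ, rfl⟩ := hρ2
  obtain ⟨σ, hσM, hσν⟩ := Finset.mem_image.1 hν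
  set P : X → Prop := fun x => c x = 0 ∨ c x = i with hPdef
  -- ν is supported outside X₀ ∪ X_i
  have hνsupp : ∀ x, P x → ν x = 0 := by
    intro x hx
    rw [← hσν]
    show (if c x ≠ 0 ∧ c x ≠ i then σ x else 0) = 0
    rw [if_neg]
    tauto
  have hνσ : ∀ x, ν x ≤ σ x := by
    intro x
    rw [← hσν]
    show (if c x ≠ 0 ∧ c x ≠ i then σ x else 0) ≤ σ x
    split <;> omega
  obtain ⟨hμsupp, hμd, hμa⟩ := hComp1 ν hν μ hμ
  -- decompose ρ'
  set ν' : X →₀ ℕ := outp c i ρ' with hν'def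
  set μ' : X →₀ ℕ := innp c i ρ' with hμ'def
  have hν'app : ∀ x, ν' x = if c x ≠ 0 ∧ c x ≠ i then ρ' x else 0 := fun _ => rfl
  have hμ'app : ∀ x, μ' x = if P x then ρ' x else 0 := fun _ => rfl
  have hν'supp : ∀ x, P x → ν' x = 0 := by
    intro x hx; rw [hν'app, if_neg]; tauto
  have hμ'supp : ∀ x, ¬ P x → μ' x = 0 := by
    intro x hx; rw [hμ'app, if_neg hx]
  have hsplit : ρ' = μ' + ν' := by
    ext x
    rw [Finsupp.add_apply, hμ'app, hν'app]
    by_cases hx : P x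
    · rw [if_pos hx, if_neg (by tauto)]; omega
    · rw [if_neg hx, if_pos (by tauto)]; omega
  have hleμ : ∀ x, μ' x ≤ μ x := by
    intro x
    rw [hμ'app]
    by_cases hx : P x
    · rw [if_pos hx]
      have := hle x
      rw [Finsupp.add_apply, hνsupp x hx] at this
      omega
    · rw [if_neg hx]; omega
  have hleν : ∀ x, ν' x ≤ ν x := by
    intro x
    rw [hν'app]
    by_cases hx : P x
    · rw [if_neg (by tauto)]; omega
    · rw [if_pos (by tauto)]
      have := hle x
      rw [Finsupp.add_apply, hμsupp x hx] at this
      omega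
  -- ν' ∈ M(i)
  have hν'M : ν' ∈ M := hMdc σ hσM ν' (fun x => (hleν x).trans (hνσ x))
  have hν'fix : outp c i ν' = ν' := by
    ext x
    show (if c x ≠ 0 ∧ c x ≠ i then ν' x else 0) = ν' x
    by_cases hx : P x
    · rw [if_neg (by tauto), hν'supp x hx]
    · rw [if_pos (by tauto)]
  have hν'mem : ν' ∈ M.image (outp c i) := Finset.mem_image.2 ⟨ν', hν'M, hν'fix⟩
  -- μ' ∈ Comp ν by the multicomplex property of Comp ν
  have hμ'Cν : μ' ∈ Comp ν := hComp4 ν hν μ hμ μ' hleμ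
  -- fiber F-vector inequality
  have hfib : ∀ j, FVec ((M.filter (fun μ => outp c i μ = ν)).image (innp c i)) j ≤
      FVec ((M.filter (fun μ => outp c i μ = ν')).image (innp c i)) j := by
    intro j
    apply Finset.card_le_card
    apply Finset.filter_subset_filter
    intro τ hτ
    obtain ⟨σ₀, hσ₀, hτeq⟩ := Finset.mem_image.1 hτ
    obtain ⟨hσ₀M, hσ₀ν⟩ := Finset.mem_filter.1 hσ₀
    have hτapp : ∀ x, τ x = if P x then σ₀ x else 0 := by
      intro x; rw [← hτeq]; rfl
    have hν'σ₀ : ∀ x, ν' x ≤ σ₀ x := by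
      intro x
      refine (hleν x).trans ?_
      rw [← hσ₀ν]
      show (if c x ≠ 0 ∧ c x ≠ i then σ₀ x else 0) ≤ σ₀ x
      split <;> omega
    have hmemM : τ + ν' ∈ M := by
      apply hMdc σ₀ hσ₀M
      intro x
      rw [Finsupp.add_apply, hτapp]
      by_cases hx : P x
      · rw [if_pos hx, hν'supp x hx]; omega
      · rw [if_neg hx]
        simpa using hν'σ₀ x
    refine Finset.mem_image.2 ⟨τ + ν', Finset.mem_filter.2 ⟨hmemM, ?_⟩, ?_⟩
    · ext x
      show (if c x ≠ 0 ∧ c x ≠ i then (τ + ν') x else 0) = ν' x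
      rw [Finsupp.add_apply]
      by_cases hx : P x
      · rw [if_neg (by tauto), hν'supp x hx]
      · rw [if_pos (by tauto), hτapp, if_neg hx, zero_add]
    · ext x
      show (if P x then (τ + ν') x else 0) = τ x
      rw [Finsupp.add_apply]
      by_cases hx : P x
      · rw [if_pos hx, hν'supp x hx, add_zero]
      · rw [if_neg hx, hτapp, if_neg hx]
  have hFle : ∀ j, FVec (Comp ν) j ≤ FVec (Comp ν') j := by
    intro j
    rw [hComp3 ν hν j, hComp3 ν' hν'mem j]
    exact hfib j
  -- μ' ∈ Comp ν'
  have hμ'Cν' : μ' ∈ Comp ν' := by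
    by_contra hnot
    set j := degM μ' with hjdef
    set A := (Comp ν).filter (fun τ => degM τ = j) with hAdef
    set B := (Comp ν').filter (fun τ => degM τ = j) with hBdef
    have hμ'A : μ' ∈ A := Finset.mem_filter.2 ⟨hμ'Cν, rfl⟩
    have hμ'B : μ' ∉ B := fun h => hnot (Finset.mem_filter.1 h).1
    have hdν' : degM ν' ≤ degM ν := degM_mono' hleν
    have hdμ' : degM μ' ≤ degM μ := degM_mono' hleμ
    have hμ'a : degC c i μ' ≤ a i := (degC_mono' c i hleμ).trans hμa
    have hBgt : ∀ τ ∈ B, MonRevGTOn P τ μ' := by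
      intro τ hτ
      obtain ⟨hτC, hτj⟩ := Finset.mem_filter.1 hτ
      obtain ⟨hτsupp, _, _⟩ := hComp1 ν' hν'mem τ hτC
      have hτne : τ ≠ μ' := by rintro rfl; exact hnot hτC
      rcases revlex_trichot (P := P) hμ'supp hτsupp hτne.symm with h | h
      · -- μ' ≻ τ would put μ' into Comp ν'
        exact absurd (hComp2 ν' hν'mem τ hτC μ' hμ'supp (hτj ▸ rfl : degM μ' = degM τ)
          (le_trans (Nat.add_le_add hdμ' hdν') hμd) hμ'a h) hnot
      · exact h
    have hBA : B ⊆ A := by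
      intro τ hτ
      obtain ⟨hτC, hτj⟩ := Finset.mem_filter.1 hτ
      obtain ⟨hτsupp, _, hτa⟩ := hComp1 ν' hν'mem τ hτC
      have hτCν : τ ∈ Comp ν := by
        apply hComp2 ν hν μ' hμ'Cν τ hτsupp hτj
        · calc degM τ + degM ν = degM μ' + degM ν := by rw [hτj]
            _ ≤ degM μ + degM ν := Nat.add_le_add_right hdμ' _
            _ ≤ d := hμd
        · exact hτa
        · exact hBgt τ hτ
      exact Finset.mem_filter.2 ⟨hτCν, hτj⟩
    have hins : insert μ' B ⊆ A := Finset.insert_subset hμ'A hBA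
    have hcard : B.card + 1 ≤ A.card := by
      have := Finset.card_le_card hins
      rwa [Finset.card_insert_of_notMem hμ'B] at this
    have hAF : A.card = FVec (Comp ν) j := rfl
    have hBF : B.card = FVec (Comp ν') j := rfl
    have := hFle j
    omega
  -- conclude
  rw [Finset.mem_biUnion]
  exact ⟨ν', hν'mem, Finset.mem_image.2 ⟨μ', hμ'Cν', hsplit.symm⟩⟩
end

section
/- For every facet τ of Λ_d, |V[τ]| − |τ ∩ V[τ]| = |X_0|, i.e., |V[τ]| − |τ ∩ V[τ]| = (∑_{i=1}^m a_i) − d. Consequently τ ∩ V[τ] lies in the domain of φ(V[τ], X_0). -/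
open Finset

/-- The "non-initial-segment" part `ρ(Y,W)` of the inverse map `ψ(Y,W)`, for an ambient
ordered set `W` whose `a`-subsets are matched with monomials. -/
def rhoMap (a : ℕ) (μ : Multiset ℕ) : Finset ℕ :=
  ((μ.sort (· ≤ ·)).zipIdx.map (fun p => p.1 + p.2 + (a - Multiset.card μ))).toFinset

/-- The one-block map `ψ(Y,W) = σ ∪ ρ`. -/
def psiMap (a : ℕ) (μ : Multiset ℕ) : Finset ℕ :=
  Finset.range (a - Multiset.card μ) ∪ rhoMap a μ

/-- `fl(τ,i)`: the revlex-first `k`-subset of `range N` containing `s` (add the earliest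
missing elements). -/
def fillF (s : Finset ℕ) (k N : ℕ) : Finset ℕ :=
  s ∪ ((((Finset.range N) \ s).sort (· ≤ ·)).take (k - s.card)).toFinset

/-- A facet of `Λ_d`, encoded blockwise: `τ i ⊆ V_i = range (n i)` with `|τ i| ≤ a i`
(for `i < m`) and `∑ |τ i| = d`. -/
def IsFacetT (m d : ℕ) (n a : ℕ → ℕ) (τ : ℕ → Finset ℕ) : Prop :=
  (∀ i, i < m → τ i ⊆ Finset.range (n i)) ∧ (∀ i, i < m → (τ i).card ≤ a i) ∧
  (∀ i, m ≤ i → τ i = ∅) ∧ (∑ i ∈ Finset.range m, (τ i).card) = d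

/-- `Φ_i(τ) = φ(V_i, X_i)(fl(τ,i))`. -/
def PhiBlock (a n : ℕ → ℕ) (τ : ℕ → Finset ℕ) (i : ℕ) : Multiset ℕ :=
  phiMap (fillF (τ i) (a i) (n i))

/-- `b i = a i - deg Φ_i(τ)`, the size of the block-`i` part of `V[τ]`. -/
def bfun (a n : ℕ → ℕ) (τ : ℕ → Finset ℕ) (i : ℕ) : ℕ :=
  a i - Multiset.card (PhiBlock a n τ i)

/-- Offsets identifying `V[τ] = ⋃ᵢ (first `b i` elements of `V_i`)` with `range (∑ b)`. -/
def offF (b : ℕ → ℕ) (i : ℕ) : ℕ := ∑ t ∈ Finset.range i, b t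

/-- `τ ∩ V[τ]`, as a subset of `range (∑ b)` via the order isomorphism. -/
def globF (m : ℕ) (b : ℕ → ℕ) (τ : ℕ → Finset ℕ) : Finset ℕ :=
  (Finset.range m).biUnion (fun i => ((τ i) ∩ Finset.range (b i)).image (fun j => offF b i + j))

/-- The full map `Φ`: index `0` gives the `X₀`-part `Φ₀(τ) = φ(V[τ],X₀)(τ ∩ V[τ])`, and index
`i+1 ≤ m` gives the `X_i`-part `Φ_i(τ)`. -/
def PhiMapT (m : ℕ) (a n : ℕ → ℕ) (τ : ℕ → Finset ℕ) : ℕ → Multiset ℕ :=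
  fun i => if i = 0 then phiMap (globF m (bfun a n τ) τ)
    else if i ≤ m then PhiBlock a n τ (i - 1) else 0

/-- Membership in `S_d(X,(∞,a))`, blockwise: `μ 0` is the `X₀`-part (`|X₀| = ∑ a - d`) and
`μ (i+1)` is the `X_i`-part (`|X_i| = n i - a i`, of degree at most `a i`). -/
def InST (m d : ℕ) (n a : ℕ → ℕ) (μ : ℕ → Multiset ℕ) : Prop :=
  (∑ i ∈ Finset.range (m + 1), Multiset.card (μ i)) ≤ d ∧
  (∀ i, i < m → Multiset.card (μ (i + 1)) ≤ a i) ∧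
  (∀ x ∈ μ 0, 1 ≤ x ∧ x ≤ (∑ i ∈ Finset.range m, a i) - d) ∧
  (∀ i, i < m → ∀ x ∈ μ (i + 1), 1 ≤ x ∧ x ≤ n i - a i) ∧
  (∀ i, m + 1 ≤ i → μ i = 0)

/-- The inverse map `Ψ`: `Ψ(μ) ∩ V_i = Ψ_i(μ) ∪ (block-i part of Ψ₀(μ))` where
`Ψ_i(μ) = ρ(X_i,V_i)(μ_{X_i})` and `Ψ₀(μ) = ψ(X₀,V[μ])(μ_{X₀}) ⊆ V[μ] ≅ range (∑ b)`. -/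
def PsiMapT (m d : ℕ) (n a : ℕ → ℕ) (μ : ℕ → Multiset ℕ) : ℕ → Finset ℕ :=
  fun i =>
    if i < m then
      rhoMap (a i) (μ (i + 1)) ∪
        ((psiMap ((∑ t ∈ Finset.range m, (a t - Multiset.card (μ (t + 1)))) -
              ((∑ t ∈ Finset.range m, a t) - d)) (μ 0) ∩
            Finset.Ico (offF (fun t => a t - Multiset.card (μ (t + 1))) i)
              (offF (fun t => a t - Multiset.card (μ (t + 1))) i +
                (a i - Multiset.card (μ (i + 1))))).image
          (fun j => j - offF (fun t => a t - Multiset.card (μ (t + 1))) i))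
    else ∅

namespace Stmt11Aux

/-- length of the initial run `c, c+1, ...` of a list. -/
def runlen : ℕ → List ℕ → ℕ
  | _, [] => 0
  | c, a :: l => if a = c then runlen (c+1) l + 1 else 0

lemma runlen_le (c : ℕ) (l : List ℕ) : runlen c l ≤ l.length := by
  induction l generalizing c with
  | nil => simp [runlen]
  | cons a l ih =>
    simp only [runlen, List.length_cons]
    split
    · exact Nat.succ_le_succ (ih (c+1))
    · simp

lemma mem_of_lt_runlen (c : ℕ) (l : List ℕ) : ∀ j < runlen c l, c + j ∈ l := by
  induction l generalizing c with
  | nil => simp [runlen]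
  | cons a l ih =>
    intro j hj
    simp only [runlen] at hj
    split at hj
    · rename_i h
      rcases Nat.eq_zero_or_pos j with h0 | h0
      · subst h0; simp [h]
      · have h2 := ih (c+1) (j-1) (by omega)
        have h3 : c + j ∈ l := by rwa [show (c+1)+(j-1) = c + j by omega] at h2
        simp [h3]
    · omega

lemma runlen_not_mem (c : ℕ) (l : List ℕ) (hl : l.Pairwise (· < ·)) (hc : ∀ x ∈ l, c ≤ x) :
    c + runlen c l ∉ l := by
  induction l generalizing c with
  | nil => simp
  | cons a l ih =>
    have ha : c ≤ a := hc a (by simp)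
    have hlt : ∀ x ∈ l, a < x := fun _ hx => List.rel_of_pairwise_cons hl hx
    simp only [runlen]
    split
    · rename_i h
      subst h
      intro hm
      rcases List.mem_cons.mp hm with h' | h'
      · omega
      · have h2 := ih (a+1) hl.of_cons (fun x hx => hlt x hx)
        rw [show (a+1) + runlen (a+1) l = a + (runlen (a+1) l + 1) by omega] at h2
        exact h2 h'
    · rename_i h
      have hac : c < a := lt_of_le_of_ne ha (Ne.symm h)
      intro hm
      rcases List.mem_cons.mp hm with h' | h'
      · omega
      · exact absurd (hlt (c+0) h') (by omega)

lemma deg_eq (c : ℕ) (l : List ℕ) (hl : l.Pairwise (· < ·)) (hc : ∀ x ∈ l, c ≤ x) :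
    (((l.zipIdx c).map (fun p => p.1 - p.2)).filter (fun x => x ≠ 0)).length
      = l.length - runlen c l := by
  induction l generalizing c with
  | nil => simp [runlen]
  | cons a l ih =>
    have ha : c ≤ a := hc a (by simp)
    have hlt : ∀ x ∈ l, a < x := fun _ hx => List.rel_of_pairwise_cons hl hx
    simp only [List.zipIdx_cons, List.map_cons, runlen, List.length_cons]
    rw [List.filter_cons]
    by_cases h : a = c
    · subst h
      simp only [Nat.sub_self]
      have hd : (decide ((0:ℕ) ≠ 0)) = false := by simp
      rw [hd]
      simp only [if_false, Bool.false_eq_true]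
      rw [ih (a+1) hl.of_cons (fun x hx => hlt x hx)]
      have := runlen_le (a+1) l
      simp only [if_true]
      omega
    · have hac : c < a := lt_of_le_of_ne ha (Ne.symm h)
      have hd : (decide (a - c ≠ 0)) = true := by simp; omega
      rw [hd]
      simp only [if_true]
      rw [List.length_cons, ih (c+1) hl.of_cons (fun x hx => by have := hlt x hx; omega)]
      have hr0 : runlen (c+1) l = 0 := by
        cases l with
        | nil => simp [runlen]
        | cons b l' =>
          have : a < b := hlt b (by simp)
          simp only [runlen]
          rw [if_neg (by omega)]
      rw [hr0, if_neg h]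
      omega


lemma block (t : Finset ℕ) (A N : ℕ) (ht : t ⊆ Finset.range N) (htA : t.card ≤ A)
    (hAN : A ≤ N) :
    (t ∩ Finset.range (A - Multiset.card (phiMap (fillF t A N)))).card + (A - t.card)
      = A - Multiset.card (phiMap (fillF t A N)) := by
  set M := ((Finset.range N \ t).sort (· ≤ ·)) with hM
  set L := M.take (A - t.card) with hL
  have hMnd : M.Nodup := Finset.sort_nodup _ _
  have hMs : M.Pairwise (· < ·) := (Finset.sortedLT_sort _).pairwise
  have hLnd : L.Nodup := hMnd.sublist (List.take_sublist _ _)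
  have hMlen : M.length = N - t.card := by
    rw [hM, Finset.length_sort, Finset.card_sdiff_of_subset ht, Finset.card_range]
  have hLlen : L.length = A - t.card := by
    rw [hL, List.length_take, hMlen]; omega
  have hF : fillF t A N = t ∪ L.toFinset := rfl
  have hLmemM : ∀ x ∈ L.toFinset, x ∈ Finset.range N \ t := by
    intro x hx
    exact (Finset.mem_sort (α := ℕ) (· ≤ ·)).mp
      (List.mem_of_mem_take (List.mem_toFinset.mp hx))
  have hdisj : Disjoint t L.toFinset := by
    rw [Finset.disjoint_right]
    intro x hx
    exact (Finset.mem_sdiff.mp (hLmemM x hx)).2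
  have hLcardF : L.toFinset.card = A - t.card := by
    rw [List.toFinset_card_of_nodup hLnd, hLlen]
  have hFcard : (fillF t A N).card = A := by
    rw [hF, Finset.card_union_of_disjoint hdisj, hLcardF]; omega
  set l := (fillF t A N).sort (· ≤ ·) with hldef
  have hls : l.Pairwise (· < ·) := (Finset.sortedLT_sort _).pairwise
  have hll : l.length = A := by rw [hldef, Finset.length_sort, hFcard]
  set s := runlen 0 l with hs
  have hsA : s ≤ A := hll ▸ runlen_le 0 l
  have hmem : ∀ j < s, j ∈ fillF t A N := by
    intro j hj
    have := mem_of_lt_runlen 0 l j hj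
    rw [Nat.zero_add] at this
    exact (Finset.mem_sort (α := ℕ) (· ≤ ·)).mp this
  have hsnot : s ∉ fillF t A N := by
    intro h
    have h2 := runlen_not_mem 0 l hls (fun x _ => Nat.zero_le x)
    rw [Nat.zero_add] at h2
    exact h2 ((Finset.mem_sort (α := ℕ) (· ≤ ·)).mpr h)
  have hdeg : Multiset.card (phiMap (fillF t A N)) = A - s := by
    rw [phiMap, Multiset.coe_card]
    have h2 := deg_eq 0 l hls (fun x _ => Nat.zero_le x)
    rw [show ((fillF t A N).sort (· ≤ ·)).zipIdx = l.zipIdx 0 from rfl, h2, hll]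
  have hb : A - Multiset.card (phiMap (fillF t A N)) = s := by omega
  rw [hb]
  have hLsub : L.toFinset ⊆ Finset.range s := by
    intro y hy
    have hyM : y ∈ M := List.mem_of_mem_take (List.mem_toFinset.mp hy)
    have hyF : y ∈ fillF t A N := hF ▸ Finset.mem_union_right _ hy
    rw [Finset.mem_range]
    by_contra hys
    push_neg at hys
    have hyns : y ≠ s := fun h => hsnot (h ▸ hyF)
    have hsy : s < y := lt_of_le_of_ne hys (Ne.symm hyns)
    have hyN : y < N := Finset.mem_range.mp (Finset.mem_sdiff.mp (hLmemM y hy)).1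
    have hsN : s < N := by omega
    have hst : s ∉ t := fun h => hsnot (hF ▸ Finset.mem_union_left _ h)
    have hsM : s ∈ M := (Finset.mem_sort (α := ℕ) (· ≤ ·)).mpr
      (Finset.mem_sdiff.mpr ⟨Finset.mem_range.mpr hsN, hst⟩)
    obtain ⟨i, hi, hgi⟩ := List.getElem_of_mem hsM
    obtain ⟨j, hj, hgj⟩ := List.getElem_of_mem (List.mem_toFinset.mp hy)
    have hjL : j < L.length := hj
    have hjM : j < M.length := by
      have := List.length_take_le (A - t.card) M
      omega
    have hMj : M[j]'hjM = y := by
      rw [← hgj]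
      exact (List.getElem_take ..).symm
    have hij : i < j := by
      by_contra hij
      push_neg at hij
      rcases Nat.eq_or_lt_of_le hij with h | h
      · subst h; omega
      · have := List.pairwise_iff_get.mp hMs ⟨j, hjM⟩ ⟨i, hi⟩ h
        simp only [List.get_eq_getElem, hgi, hMj] at this
        omega
    have hsL : s ∈ L := by
      have hiL : i < L.length := by omega
      have he : L[i]'hiL = s := (List.getElem_take ..).trans hgi
      exact he ▸ List.getElem_mem _
    exact hsnot (hF ▸ Finset.mem_union_right _ (List.mem_toFinset.mpr hsL))
  have hcover : Finset.range s = (t ∩ Finset.range s) ∪ L.toFinset := by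
    apply Finset.Subset.antisymm
    · intro x hx
      have hxF := hmem x (Finset.mem_range.mp hx)
      rw [hF] at hxF
      rcases Finset.mem_union.mp hxF with h | h
      · exact Finset.mem_union_left _ (Finset.mem_inter.mpr ⟨h, hx⟩)
      · exact Finset.mem_union_right _ h
    · intro x hx
      rcases Finset.mem_union.mp hx with h | h
      · exact (Finset.mem_inter.mp h).2
      · exact hLsub h
  have hkey := congrArg Finset.card hcover
  rw [Finset.card_range,
    Finset.card_union_of_disjoint
      (Finset.disjoint_of_subset_left Finset.inter_subset_left hdisj), hLcardF] at hkey
  omega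

end Stmt11Aux

/-- Lemma `domain`: for every facet `τ` of `Λ_d`, `|V[τ]| - |τ ∩ V[τ]| = |X₀| = (∑ a) - d`,
so `τ ∩ V[τ]` lies in the domain of `φ(V[τ], X₀)`. -/
theorem stmt11 (m d : ℕ) (n a : ℕ → ℕ)
    (hd1 : 1 ≤ d) (hd2 : d ≤ ∑ i ∈ Finset.range m, a i)
    (ha : ∀ i, i < m → 0 < a i ∧ a i ≤ n i) :
    ∀ τ : ℕ → Finset ℕ, IsFacetT m d n a τ →
      (globF m (bfun a n τ) τ).card + ((∑ i ∈ Finset.range m, a i) - d)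
        = ∑ i ∈ Finset.range m, bfun a n τ i := by
  intro τ hτ
  obtain ⟨hsub, hcard, -, hsum⟩ := hτ
  have hblock : ∀ i ∈ Finset.range m,
      (τ i ∩ Finset.range (bfun a n τ i)).card + (a i - (τ i).card) = bfun a n τ i := by
    intro i hi
    have him := Finset.mem_range.mp hi
    exact Stmt11Aux.block (τ i) (a i) (n i) (hsub i him) (hcard i him) (ha i him).2
  set b := bfun a n τ with hbdef
  have hoff : ∀ i j : ℕ, i < j → offF b i + b i ≤ offF b j := by
    intro i j hij
    have h1 : offF b i + b i = offF b (i+1) := (Finset.sum_range_succ b i).symm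
    rw [h1]
    exact Finset.sum_le_sum_of_subset (Finset.range_subset_range.mpr hij)
  have hglob : (globF m b τ).card
      = ∑ i ∈ Finset.range m, (τ i ∩ Finset.range (b i)).card := by
    rw [globF, Finset.card_biUnion]
    · exact Finset.sum_congr rfl fun i _ =>
        Finset.card_image_of_injective _ (add_right_injective _)
    · intro i _ j _ hij
      have key : ∀ p q : ℕ, p < q →
          Disjoint ((τ p ∩ Finset.range (b p)).image (fun x => offF b p + x))
            ((τ q ∩ Finset.range (b q)).image (fun x => offF b q + x)) := by
        intro p q hpq
        rw [Finset.disjoint_left]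
        rintro x hxp hxq
        obtain ⟨u, hu, rfl⟩ := Finset.mem_image.mp hxp
        obtain ⟨v, hv, hvx⟩ := Finset.mem_image.mp hxq
        have hub : u < b p := Finset.mem_range.mp (Finset.mem_inter.mp hu).2
        have := hoff p q hpq
        omega
      rcases Nat.lt_or_ge i j with h | h
      · exact key i j h
      · exact (key j i (by omega)).symm
  rw [hglob]
  have hτa : ∀ i ∈ Finset.range m, (τ i).card ≤ a i :=
    fun i hi => hcard i (Finset.mem_range.mp hi)
  have h1 : (∑ i ∈ Finset.range m, a i) - d
      = ∑ i ∈ Finset.range m, (a i - (τ i).card) := by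
    rw [Finset.sum_tsub_distrib _ hτa, hsum]
  rw [h1, ← Finset.sum_add_distrib]
  exact Finset.sum_congr rfl hblock
end

section
/- For every facet τ of Λ_d, deg(Φ(τ)) = |R(τ)|, where R(τ) = up(τ) ∪ tail(τ) is the restriction face of τ in the revlex shelling of Λ_d. More precisely, R(τ) = ρ(X_0, V[μ])(μ_{X_0}) ∪ (∪_{i=1}^m ρ(X_i, V_i)(μ_{X_i})) where μ = Φ(τ). -/
open Finset

noncomputable def pf (σ : Finset ℕ) : ℕ := sInf {j | j ∉ σ}

lemma pf_not_mem (σ : Finset ℕ) : pf σ ∉ σ := by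
  have h : {j | j ∉ σ}.Nonempty := by
    obtain ⟨j, hj⟩ := Set.Infinite.nonempty (Set.Finite.infinite_compl σ.finite_toSet)
    exact ⟨j, hj⟩
  exact Nat.sInf_mem h

lemma lt_pf_mem (σ : Finset ℕ) {j : ℕ} (h : j < pf σ) : j ∈ σ := by
  by_contra hj
  exact absurd (Nat.sInf_le hj) (not_le.mpr h)

lemma range_pf_subset (σ : Finset ℕ) : range (pf σ) ⊆ σ := fun j hj =>
  lt_pf_mem σ (mem_range.mp hj)

lemma pf_le_card (σ : Finset ℕ) : pf σ ≤ σ.card := by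
  have := card_le_card (range_pf_subset σ)
  simpa using this

-- sorted-list get facts
lemma sort_get_strictMono (σ : Finset ℕ) {i j : ℕ} (hj : j < (σ.sort (· ≤ ·)).length)
    (hij : i < j) : (σ.sort (· ≤ ·))[i]'(hij.trans hj) < (σ.sort (· ≤ ·))[j] := by
  have := (Finset.sortedLT_sort σ).pairwise.rel_get_of_lt
    (a := ⟨i, hij.trans hj⟩) (b := ⟨j, hj⟩) (by simpa using hij)
  simpa using this

lemma sort_get_ge (σ : Finset ℕ) : ∀ (j : ℕ) (hj : j < (σ.sort (· ≤ ·)).length),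
    j ≤ (σ.sort (· ≤ ·))[j] := by
  intro j
  induction j with
  | zero => intro _; exact Nat.zero_le _
  | succ i ih =>
    intro hj
    have h1 := ih (Nat.lt_of_succ_lt hj)
    have h2 := sort_get_strictMono σ hj (Nat.lt_succ_self i)
    omega

lemma sort_get_lt_pf (σ : Finset ℕ) : ∀ (j : ℕ) (hj : j < (σ.sort (· ≤ ·)).length),
    j < pf σ → (σ.sort (· ≤ ·))[j] = j := by
  intro j
  induction j using Nat.strong_induction_on with
  | _ j ih =>
    intro hj hjp
    have hmem : j ∈ σ.sort (· ≤ ·) := (Finset.mem_sort _).mpr (lt_pf_mem σ hjp)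
    obtain ⟨i, hi, hij⟩ := List.getElem_of_mem hmem
    rcases lt_trichotomy i j with h | h | h
    · have := ih i h hi (h.trans hjp)
      omega
    · subst h; exact hij
    · have h1 := sort_get_ge σ i hi
      have := sort_get_strictMono σ hi (j := i) h
      omega

lemma sort_get_ge_pf (σ : Finset ℕ) : ∀ (j : ℕ) (hj : j < (σ.sort (· ≤ ·)).length),
    pf σ ≤ j → j + 1 ≤ (σ.sort (· ≤ ·))[j] := by
  have hpf : ∀ (hj : pf σ < (σ.sort (· ≤ ·)).length), pf σ + 1 ≤ (σ.sort (· ≤ ·))[pf σ] := by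
    intro hj
    have h0 := sort_get_ge σ (pf σ) hj
    have hne : (σ.sort (· ≤ ·))[pf σ] ≠ pf σ := by
      intro hc
      have : (σ.sort (· ≤ ·))[pf σ] ∈ σ := (Finset.mem_sort _).mp (List.getElem_mem _)
      rw [hc] at this
      exact pf_not_mem σ this
    omega
  intro j
  induction j with
  | zero =>
    intro hj hp
    have := hpf (by omega)
    have : pf σ = 0 := Nat.le_zero.mp hp
    simp_all
  | succ i ih =>
    intro hj hp
    rcases Nat.lt_or_ge (pf σ) (i+1) with h | h
    · have h1 := ih (Nat.lt_of_succ_lt hj) (by omega)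
      have h2 := sort_get_strictMono σ hj (Nat.lt_succ_self i)
      omega
    · have he : pf σ = i + 1 := by omega
      have := hpf (by omega)
      simp_all

lemma list_filter_ne_zero (L : List ℕ) (p : ℕ) (hp : p ≤ L.length)
    (h1 : ∀ (j : ℕ) (h : j < L.length), j < p → L[j] = 0)
    (h2 : ∀ (j : ℕ) (h : j < L.length), p ≤ j → L[j] ≠ 0) :
    L.filter (fun x => x ≠ 0) = L.drop p := by
  conv_lhs => rw [← List.take_append_drop p L]
  rw [List.filter_append]
  have ht : (L.take p).filter (fun x => x ≠ 0) = [] := by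
    rw [List.filter_eq_nil_iff]
    intro x hx
    obtain ⟨i, hi, hix⟩ := List.getElem_of_mem hx
    have hip : i < p := by
      have := (List.length_take : (L.take p).length = _); omega
    rw [List.getElem_take] at hix
    simp only [ne_eq, decide_not, Bool.not_eq_true', decide_eq_false_iff_not, not_not]
    rw [← hix]; exact h1 i (by omega) hip
  have hd : (L.drop p).filter (fun x => x ≠ 0) = L.drop p := by
    rw [List.filter_eq_self]
    intro x hx
    obtain ⟨i, hi, hix⟩ := List.getElem_of_mem hx
    rw [List.getElem_drop] at hix
    have := (List.length_drop : (L.drop p).length = _)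
    simp only [ne_eq, decide_not, Bool.not_eq_true', decide_eq_false_iff_not, not_not,
      Bool.not_eq_false', decide_eq_true_iff]
    rw [← hix]; exact h2 (p+i) (by omega) (by omega)
  rw [ht, hd, List.nil_append]

lemma msort_coe (L : List ℕ) (h : L.Pairwise (· ≤ ·)) : (↑L : Multiset ℕ).sort (· ≤ ·) = L :=
  List.Perm.eq_of_pairwise' (Multiset.pairwise_sort _ _) h
    (Multiset.coe_eq_coe.mp (by rw [Multiset.sort_eq]))

lemma phiMap_eq_drop (σ : Finset ℕ) :
    phiMap σ = ↑((((σ.sort (· ≤ ·)).zipIdx.map (fun p => p.1 - p.2))).drop (pf σ)) := by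
  unfold phiMap
  congr 1
  have hlen : (σ.sort (· ≤ ·)).length = σ.card := Finset.length_sort _
  have hElen : ((σ.sort (· ≤ ·)).zipIdx.map (fun p => p.1 - p.2)).length = (σ.sort (· ≤ ·)).length := by simp
  apply list_filter_ne_zero
  · rw [hElen, hlen]; exact pf_le_card σ
  · intro j hj hjp
    rw [hElen] at hj
    rw [List.getElem_map, List.getElem_zipIdx]
    simp only
    rw [sort_get_lt_pf σ j hj hjp]
    omega
  · intro j hj hjp
    rw [hElen] at hj
    rw [List.getElem_map, List.getElem_zipIdx]
    simp only
    have := sort_get_ge_pf σ j hj hjp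
    omega

lemma phiMap_card (σ : Finset ℕ) : Multiset.card (phiMap σ) = σ.card - pf σ := by
  rw [phiMap_eq_drop]
  simp [Finset.length_sort]

lemma enum_map_sorted (σ : Finset ℕ) :
    ((σ.sort (· ≤ ·)).zipIdx.map (fun p => p.1 - p.2)).Pairwise (· ≤ ·) := by
  rw [List.pairwise_iff_getElem]
  intro i j hi hj hij
  simp only [List.length_map, List.length_zipIdx] at hi hj
  rw [List.getElem_map, List.getElem_map, List.getElem_zipIdx, List.getElem_zipIdx]
  simp only
  have h1 := sort_get_strictMono σ (i := i) (j := j) hj hij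
  have h2 := sort_get_ge σ i hi
  -- need l[j] - j ≥ l[i] - i : from strict mono, l[j] ≥ l[i] + (j - i)
  have key : ∀ (t : ℕ) (ht : i + t < (σ.sort (· ≤ ·)).length),
      (σ.sort (· ≤ ·))[i] + t ≤ (σ.sort (· ≤ ·))[i + t] := by
    intro t
    induction t with
    | zero => simp
    | succ u ihu =>
      intro ht
      have := ihu (by omega)
      have h3 := sort_get_strictMono σ (i := i + u) (j := i + u + 1) (by omega) (by omega)
      have h4 : (σ.sort (· ≤ ·))[i+u+1] = (σ.sort (· ≤ ·))[i + (u+1)] := by congr 1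
      omega
  have h5 := key (j - i) (by omega)
  have h6 : (σ.sort (· ≤ ·))[i + (j - i)]'(by omega) = (σ.sort (· ≤ ·))[j] := by congr 1; omega
  omega

lemma drop_toFinset_eq (σ : Finset ℕ) :
    ((σ.sort (· ≤ ·)).drop (pf σ)).toFinset = σ \ range (pf σ) := by
  have hlen : (σ.sort (· ≤ ·)).length = σ.card := Finset.length_sort _
  ext x
  rw [List.mem_toFinset, Finset.mem_sdiff, Finset.mem_range]
  constructor
  · intro hx
    obtain ⟨i, hi, hix⟩ := List.getElem_of_mem hx
    rw [List.getElem_drop] at hix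
    have hlend := (List.length_drop : ((σ.sort (· ≤ ·)).drop (pf σ)).length = _)
    have hmem : x ∈ σ := by
      rw [← hix]; exact (Finset.mem_sort _).mp (List.getElem_mem _)
    have := sort_get_ge_pf σ (pf σ + i) (by omega) (by omega)
    exact ⟨hmem, by omega⟩
  · rintro ⟨hx, hxp⟩
    have hx' : x ∈ σ.sort (· ≤ ·) := (Finset.mem_sort _).mpr hx
    obtain ⟨i, hi, hix⟩ := List.getElem_of_mem hx'
    have hip : pf σ ≤ i := by
      by_contra h
      rw [sort_get_lt_pf σ i hi (by omega)] at hix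
      omega
    rw [← hix]
    have : (σ.sort (· ≤ ·))[i] = ((σ.sort (· ≤ ·)).drop (pf σ))[i - pf σ]'(by
      rw [List.length_drop]; omega) := by
      rw [List.getElem_drop]; congr 1; omega
    rw [this]
    exact List.getElem_mem _

lemma rho_phi (σ : Finset ℕ) : rhoMap σ.card (phiMap σ) = σ \ range (pf σ) := by
  have hlen : (σ.sort (· ≤ ·)).length = σ.card := Finset.length_sort _
  have hcard := phiMap_card σ
  have hple := pf_le_card σ
  rw [← drop_toFinset_eq]
  unfold rhoMap
  rw [phiMap_eq_drop] at hcard ⊢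
  rw [msort_coe _ ((enum_map_sorted σ).sublist (List.drop_sublist _ _))]
  rw [hcard]
  congr 1
  apply List.ext_getElem
  · simp
  · intro i h1 h2
    simp only [List.getElem_map, List.getElem_zipIdx, List.getElem_drop]
    simp only [List.length_map, List.length_zipIdx, List.length_drop] at h1
    have hi : pf σ + i < (σ.sort (· ≤ ·)).length := by omega
    have hge := sort_get_ge σ (pf σ + i) hi
    omega

lemma le_pf (σ : Finset ℕ) (q : ℕ) (h : range q ⊆ σ) : q ≤ pf σ := by
  by_contra hq
  exact pf_not_mem σ (h (mem_range.mpr (by omega)))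

lemma mem_take_of_lt (s : Finset ℕ) (k : ℕ) {x y : ℕ} (hx : x ∈ (s.sort (· ≤ ·)).take k)
    (hy : y ∈ s) (hxy : y < x) : y ∈ (s.sort (· ≤ ·)).take k := by
  obtain ⟨i, hi, hix⟩ := List.getElem_of_mem hx
  rw [List.getElem_take] at hix
  have hik : i < k := by have := (List.length_take : ((s.sort (· ≤ ·)).take k).length = _); omega
  have hil : i < (s.sort (· ≤ ·)).length := by
    have := (List.length_take : ((s.sort (· ≤ ·)).take k).length = _); omega
  obtain ⟨j, hj, hjy⟩ := List.getElem_of_mem ((Finset.mem_sort (α := ℕ) (· ≤ ·)).mpr hy)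
  have hji : j < i := by
    by_contra h
    rcases Nat.eq_or_lt_of_le (not_lt.mp h) with h' | h'
    · subst h'; omega
    · have := sort_get_strictMono s hj h'; omega
  have : y = ((s.sort (· ≤ ·)).take k)[j]'(by rw [List.length_take]; omega) := by
    rw [List.getElem_take, hjy]
  rw [this]; exact List.getElem_mem _

section fill
variable {τ : Finset ℕ} {k N : ℕ} (hτ : τ ⊆ range N) (hs : τ.card ≤ k) (hkN : k ≤ N)
include hτ hs hkN

lemma fill_subset_range : fillF τ k N ⊆ range N := by
  unfold fillF
  apply Finset.union_subset hτ
  intro x hx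
  rw [List.mem_toFinset] at hx
  have := (Finset.mem_sort (α := ℕ) (· ≤ ·)).mp (List.mem_of_mem_take hx)
  exact (Finset.mem_sdiff.mp this).1

lemma fill_card : (fillF τ k N).card = k := by
  unfold fillF
  have hdisj : Disjoint τ ((((range N) \ τ).sort (· ≤ ·)).take (k - τ.card)).toFinset := by
    rw [Finset.disjoint_right]
    intro x hx hxτ
    rw [List.mem_toFinset] at hx
    have := (Finset.mem_sort (α := ℕ) (· ≤ ·)).mp (List.mem_of_mem_take hx)
    exact (Finset.mem_sdiff.mp this).2 hxτ
  rw [Finset.card_union_of_disjoint hdisj]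
  have hnd : ((((range N) \ τ).sort (· ≤ ·)).take (k - τ.card)).Nodup :=
    (Finset.sort_nodup _ _).sublist (List.take_sublist _ _)
  rw [List.toFinset_card_of_nodup hnd, List.length_take, Finset.length_sort,
    Finset.card_sdiff_of_subset hτ, Finset.card_range]
  omega

lemma fill_sdiff (x : ℕ) (hx : x ∈ fillF τ k N) (hxp : pf (fillF τ k N) ≤ x) : x ∈ τ := by
  set F := fillF τ k N with hF
  by_contra hxτ
  have hxA : x ∈ ((((range N) \ τ).sort (· ≤ ·)).take (k - τ.card)) := by
    rw [hF] at hx; unfold fillF at hx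
    rcases Finset.mem_union.mp hx with h | h
    · exact absurd h hxτ
    · exact List.mem_toFinset.mp h
  have hxN : x < N := by
    have := fill_subset_range hτ hs hkN (hF ▸ hx)
    rwa [mem_range] at this
  have hpN : pf F < N := by omega
  have hpmem : pf F ∈ (range N) \ τ := by
    rw [Finset.mem_sdiff, mem_range]
    refine ⟨hpN, fun h => pf_not_mem F (Finset.mem_union_left _ h)⟩
  have hne : pf F ≠ x := fun h => pf_not_mem F (h ▸ hx)
  have : pf F ∈ ((((range N) \ τ).sort (· ≤ ·)).take (k - τ.card)) :=
    mem_take_of_lt _ _ hxA hpmem (by omega)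
  exact pf_not_mem F (Finset.mem_union_right _ (List.mem_toFinset.mpr this))

lemma fill_sdiff_eq : fillF τ k N \ range (pf (fillF τ k N)) = τ \ range (pf (fillF τ k N)) := by
  ext x
  simp only [Finset.mem_sdiff, mem_range, not_lt]
  constructor
  · rintro ⟨h1, h2⟩; exact ⟨fill_sdiff hτ hs hkN x h1 h2, h2⟩
  · rintro ⟨h1, h2⟩; exact ⟨Finset.mem_union_left _ h1, h2⟩

lemma pf_lt_pf_fill (hlt : τ.card < k) : pf τ < pf (fillF τ k N) := by
  have hpτN : pf τ < N := by have := pf_le_card τ; omega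
  have hpτmem : pf τ ∈ (range N) \ τ := by
    rw [Finset.mem_sdiff, mem_range]
    exact ⟨hpτN, pf_not_mem τ⟩
  -- the take list is nonempty
  have hlen : ((((range N) \ τ).sort (· ≤ ·)).take (k - τ.card)).length = k - τ.card := by
    rw [List.length_take, Finset.length_sort, Finset.card_sdiff_of_subset hτ, Finset.card_range]
    omega
  have hne : ((((range N) \ τ).sort (· ≤ ·)).take (k - τ.card)) ≠ [] := by
    intro h; rw [h] at hlen; simp at hlen; omega
  obtain ⟨x, hx⟩ := List.exists_mem_of_ne_nil _ hne
  have hxmem : x ∈ (range N) \ τ :=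
    (Finset.mem_sort _).mp (List.mem_of_mem_take hx)
  have hpτA : pf τ ∈ ((((range N) \ τ).sort (· ≤ ·)).take (k - τ.card)) := by
    rcases Nat.lt_or_ge (pf τ) x with h | h
    · exact mem_take_of_lt _ _ hx hpτmem h
    · have hxτ : x ∉ τ := (Finset.mem_sdiff.mp hxmem).2
      have : pf τ ≤ x := by
        by_contra h'
        exact hxτ (lt_pf_mem τ (by omega))
      have : x = pf τ := by omega
      rwa [← this]
  have hsub : range (pf τ + 1) ⊆ fillF τ k N := by
    intro j hj
    rw [mem_range] at hj
    rcases Nat.lt_or_ge j (pf τ) with h | h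
    · exact Finset.mem_union_left _ (lt_pf_mem τ h)
    · have : j = pf τ := by omega
      subst this
      exact Finset.mem_union_right _ (List.mem_toFinset.mpr hpτA)
  have := le_pf _ _ hsub
  omega

lemma fill_full (hfull : τ.card = k) : fillF τ k N = τ := by
  unfold fillF
  rw [hfull]
  simp

end fill

lemma offF_succ (b : ℕ → ℕ) (i : ℕ) : offF b (i+1) = offF b i + b i :=
  Finset.sum_range_succ b i

lemma offF_mono (b : ℕ → ℕ) {i j : ℕ} (h : i ≤ j) : offF b i ≤ offF b j := by
  unfold offF
  exact Finset.sum_le_sum_of_subset (Finset.range_subset_range.mpr h)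

lemma block_exists (b : ℕ → ℕ) (m x : ℕ) (hx : x < offF b m) :
    ∃ i < m, offF b i ≤ x ∧ x < offF b i + b i := by
  induction m with
  | zero => simp [offF] at hx
  | succ k ih =>
    rcases Nat.lt_or_ge x (offF b k) with h | h
    · obtain ⟨i, hi, h1, h2⟩ := ih h
      exact ⟨i, by omega, h1, h2⟩
    · rw [offF_succ] at hx
      exact ⟨k, by omega, h, hx⟩

lemma block_unique (b : ℕ → ℕ) {i j i' j' : ℕ} (hj : j < b i) (hj' : j' < b i')
    (h : offF b i + j = offF b i' + j') : i = i' ∧ j = j' := by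
  have key : ∀ s t u v : ℕ, s < t → u < b s → v < b t → offF b s + u ≠ offF b t + v := by
    intro s t u v hst hu hv
    have h1 : offF b (s+1) ≤ offF b t := offF_mono b (by omega)
    rw [offF_succ] at h1
    omega
  rcases lt_trichotomy i i' with h' | h' | h'
  · exact absurd h (key i i' j j' h' hj hj')
  · subst h'; omega
  · exact absurd h.symm (key i' i j' j h' hj' hj)

lemma mem_globF_iff (m : ℕ) (b : ℕ → ℕ) (τ : ℕ → Finset ℕ) {i j : ℕ} (hi : i < m)
    (hj : j < b i) : offF b i + j ∈ globF m b τ ↔ j ∈ τ i := by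
  unfold globF
  rw [Finset.mem_biUnion]
  constructor
  · rintro ⟨i', hi', hmem⟩
    rw [Finset.mem_image] at hmem
    obtain ⟨j', hj', heq⟩ := hmem
    rw [Finset.mem_inter, Finset.mem_range] at hj'
    obtain ⟨he1, he2⟩ := block_unique b hj hj'.2 heq.symm
    subst he1; subst he2
    exact hj'.1
  · intro hmem
    exact ⟨i, Finset.mem_range.mpr hi, Finset.mem_image.mpr
      ⟨j, Finset.mem_inter.mpr ⟨hmem, Finset.mem_range.mpr hj⟩, rfl⟩⟩

lemma globF_subset (m : ℕ) (b : ℕ → ℕ) (τ : ℕ → Finset ℕ) :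
    globF m b τ ⊆ Finset.range (offF b m) := by
  intro x hx
  unfold globF at hx
  rw [Finset.mem_biUnion] at hx
  obtain ⟨i, hi, hmem⟩ := hx
  rw [Finset.mem_image] at hmem
  obtain ⟨j, hj, heq⟩ := hmem
  rw [Finset.mem_inter, Finset.mem_range] at hj
  rw [Finset.mem_range, ← heq]
  rw [Finset.mem_range] at hi
  have : offF b (i+1) ≤ offF b m := offF_mono b (by omega)
  rw [offF_succ] at this
  omega

lemma globF_card (m : ℕ) (b : ℕ → ℕ) (τ : ℕ → Finset ℕ) :
    (globF m b τ).card = ∑ i ∈ Finset.range m, ((τ i) ∩ Finset.range (b i)).card := by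
  unfold globF
  rw [Finset.card_biUnion]
  · apply Finset.sum_congr rfl
    intro i _
    apply Finset.card_image_of_injective
    intro x y hxy
    simp only at hxy
    omega
  · intro i hi i' hi' hne
    simp only [Function.onFun]
    rw [Finset.disjoint_left]
    intro x hx hx'
    rw [Finset.mem_image] at hx hx'
    obtain ⟨j, hj, heq⟩ := hx
    obtain ⟨j', hj', heq'⟩ := hx'
    rw [Finset.mem_inter, Finset.mem_range] at hj hj'
    exact hne (block_unique b hj.2 hj'.2 (heq.trans heq'.symm)).1

lemma slice_card (m : ℕ) (b : ℕ → ℕ) (T : Finset ℕ) (hT : T ⊆ Finset.range (offF b m)) :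
    ∑ i ∈ Finset.range m, (T ∩ Finset.Ico (offF b i) (offF b i + b i)).card = T.card := by
  have : T = (Finset.range m).biUnion (fun i => T ∩ Finset.Ico (offF b i) (offF b i + b i)) := by
    ext x
    rw [Finset.mem_biUnion]
    constructor
    · intro hx
      have hxr := Finset.mem_range.mp (hT hx)
      obtain ⟨i, hi, h1, h2⟩ := block_exists b m x hxr
      exact ⟨i, Finset.mem_range.mpr hi, Finset.mem_inter.mpr ⟨hx, Finset.mem_Ico.mpr ⟨h1, h2⟩⟩⟩
    · rintro ⟨i, _, hmem⟩
      exact (Finset.mem_inter.mp hmem).1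
  conv_rhs => rw [this]
  rw [Finset.card_biUnion]
  intro i hi i' hi' hne
  simp only [Function.onFun]
  rw [Finset.disjoint_left]
  intro x hx hx'
  rw [Finset.mem_inter, Finset.mem_Ico] at hx hx'
  obtain ⟨_, h1, h2⟩ := hx
  obtain ⟨_, h1', h2'⟩ := hx'
  have key := block_unique b (i := i) (j := x - offF b i) (i' := i') (j' := x - offF b i')
    (by omega) (by omega) (by omega)
  exact hne key.1

section block
variable {a n : ℕ → ℕ} {τ : ℕ → Finset ℕ} {i : ℕ}
  (hτr : τ i ⊆ range (n i)) (hsc : (τ i).card ≤ a i) (han : a i ≤ n i)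
include hτr hsc han

lemma bfun_eq : bfun a n τ i = pf (fillF (τ i) (a i) (n i)) := by
  unfold bfun PhiBlock
  rw [phiMap_card, fill_card hτr hsc han]
  have h1 : pf (fillF (τ i) (a i) (n i)) ≤ a i := by
    have := pf_le_card (fillF (τ i) (a i) (n i))
    rwa [fill_card hτr hsc han] at this
  omega

lemma rho_block : rhoMap (a i) (PhiBlock a n τ i) =
    τ i \ range (pf (fillF (τ i) (a i) (n i))) := by
  unfold PhiBlock
  have h := rho_phi (fillF (τ i) (a i) (n i))
  rw [fill_card hτr hsc han] at h
  rw [h]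
  exact fill_sdiff_eq hτr hsc han

lemma pf_fill_le : pf (fillF (τ i) (a i) (n i)) ≤ a i := by
  have := pf_le_card (fillF (τ i) (a i) (n i))
  rwa [fill_card hτr hsc han] at this

lemma pf_tau_le_pf_fill : pf (τ i) ≤ pf (fillF (τ i) (a i) (n i)) :=
  le_pf _ _ (fun x hx => Finset.mem_union_left _ (range_pf_subset (τ i) hx))

lemma card_tau_sdiff : (τ i \ range (pf (fillF (τ i) (a i) (n i)))).card
    = a i - pf (fillF (τ i) (a i) (n i)) := by
  rw [← fill_sdiff_eq hτr hsc han,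
    Finset.card_sdiff_of_subset (fun x hx => range_pf_subset _ hx), fill_card hτr hsc han,
    Finset.card_range]

lemma card_tau_inter : (τ i ∩ range (pf (fillF (τ i) (a i) (n i)))).card
    = (τ i).card - (a i - pf (fillF (τ i) (a i) (n i))) := by
  have h1 := card_tau_sdiff hτr hsc han
  have h2 : (τ i ∩ range (pf (fillF (τ i) (a i) (n i)))).card
      + (τ i \ range (pf (fillF (τ i) (a i) (n i)))).card = (τ i).card := by
    rw [Finset.card_inter_add_card_sdiff]
  omega

lemma a_sub_b_le_card : a i - pf (fillF (τ i) (a i) (n i)) ≤ (τ i).card := by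
  have h1 := card_tau_sdiff hτr hsc han
  have := Finset.card_le_card (Finset.sdiff_subset
    (s := τ i) (t := range (pf (fillF (τ i) (a i) (n i)))))
  omega

lemma upT_full_eq (hfull : (τ i).card = a i) :
    (if (τ i).card = a i then
      (τ i).filter (fun j => ∃ g ∈ Finset.range (n i) \ τ i, g < j) else ∅)
    = τ i \ range (pf (τ i)) := by
  rw [if_pos hfull]
  ext j
  rw [Finset.mem_filter, Finset.mem_sdiff, Finset.mem_range]
  constructor
  · rintro ⟨hj, g, hg, hgj⟩
    rw [Finset.mem_sdiff, Finset.mem_range] at hg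
    refine ⟨hj, fun h => ?_⟩
    have : g ∈ τ i := lt_pf_mem _ (by omega)
    exact hg.2 this
  · rintro ⟨hj, hjp⟩
    refine ⟨hj, pf (τ i), ?_, ?_⟩
    · rw [Finset.mem_sdiff, Finset.mem_range]
      have hjn := Finset.mem_range.mp (hτr hj)
      exact ⟨by omega, pf_not_mem _⟩
    · have : j ≠ pf (τ i) := fun h => pf_not_mem _ (h ▸ hj)
      omega

end block

lemma pf_range (k : ℕ) : pf (range k) = k := by
  have h1 : k ≤ pf (range k) := le_pf _ _ (fun x hx => hx)
  have h2 : pf (range k) ∉ range k := pf_not_mem _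
  rw [Finset.mem_range] at h2
  have h3 := pf_le_card (range k)
  rw [Finset.card_range] at h3
  omega

lemma image_slice (T : Finset ℕ) (o w : ℕ) :
    (T ∩ Finset.Ico o (o+w)).image (fun j => j - o)
    = (Finset.range w).filter (fun j => o + j ∈ T) := by
  ext j
  rw [Finset.mem_image, Finset.mem_filter, Finset.mem_range]
  constructor
  · rintro ⟨x, hx, rfl⟩
    rw [Finset.mem_inter, Finset.mem_Ico] at hx
    obtain ⟨hxT, h1, h2⟩ := hx
    have : o + (x - o) = x := by omega
    rw [this]
    exact ⟨by omega, hxT⟩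
  · rintro ⟨h1, h2⟩
    exact ⟨o + j, Finset.mem_inter.mpr ⟨h2, Finset.mem_Ico.mpr ⟨by omega, by omega⟩⟩, by omega⟩

/-- The block-`i` part of `up(τ)`: if `|τ ∩ V_i| = a i`, the elements of `τ ∩ V_i` occurring
after the first gap of `V_i - τ` (smaller index = earlier = `≻`-larger). -/
def upT (a n : ℕ → ℕ) (τ : ℕ → Finset ℕ) (i : ℕ) : Finset ℕ :=
  if (τ i).card = a i then
    (τ i).filter (fun j => ∃ g ∈ Finset.range (n i) \ τ i, g < j) else ∅

/-- The block-`i` part of `tail(τ)`: elements of `τ ∩ V_i` occurring strictly after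
`Gap(τ)`, the earliest vertex lying in neither `τ` nor a full block. -/
def tailT (m : ℕ) (a n : ℕ → ℕ) (τ : ℕ → Finset ℕ) (i : ℕ) : Finset ℕ :=
  (τ i).filter (fun j => ∃ i₀, i₀ < m ∧ (τ i₀).card < a i₀ ∧
    (∀ t, t < i₀ → (τ t).card = a t) ∧
    (i₀ < i ∨ (i₀ = i ∧ ∃ g, g < j ∧ g ∉ τ i ∧ g < n i)))

/-- For every facet `τ` of `Λ_d`, `deg Φ(τ) = |R(τ)|` where `R(τ) = up(τ) ∪ tail(τ)`;
more precisely, blockwise,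
`R(τ) = ρ(X₀,V[μ])(μ_{X₀}) ∪ ⋃ᵢ ρ(X_i,V_i)(μ_{X_i})` with `μ = Φ(τ)`. -/
theorem stmt12 (m d : ℕ) (n a : ℕ → ℕ)
    (hd1 : 1 ≤ d) (hd2 : d ≤ ∑ i ∈ Finset.range m, a i)
    (ha : ∀ i, i < m → 0 < a i ∧ a i ≤ n i) :
    ∀ τ : ℕ → Finset ℕ, IsFacetT m d n a τ →
      ((∑ i ∈ Finset.range (m + 1), Multiset.card (PhiMapT m a n τ i))
        = ∑ i ∈ Finset.range m, (upT a n τ i ∪ tailT m a n τ i).card) ∧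
      (∀ i, i < m →
        upT a n τ i ∪ tailT m a n τ i
          = rhoMap (a i) (PhiMapT m a n τ (i + 1)) ∪
            Finset.image (fun j => j - offF (bfun a n τ) i)
              (rhoMap ((∑ t ∈ Finset.range m, bfun a n τ t) -
                    ((∑ t ∈ Finset.range m, a t) - d)) (PhiMapT m a n τ 0) ∩
                Finset.Ico (offF (bfun a n τ) i) (offF (bfun a n τ) i + bfun a n τ i))) := by
  intro τ hfacet
  obtain ⟨hτr, hsc, hτe, hsum⟩ := hfacet
  have han : ∀ i, i < m → a i ≤ n i := fun i hi => (ha i hi).2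
  have hb : ∀ i, i < m → bfun a n τ i = pf (fillF (τ i) (a i) (n i)) :=
    fun i hi => bfun_eq (hτr i hi) (hsc i hi) (han i hi)
  have hble : ∀ i, bfun a n τ i ≤ a i := fun i => Nat.sub_le _ _
  have hrho : ∀ i, i < m → rhoMap (a i) (PhiBlock a n τ i) = τ i \ range (bfun a n τ i) := by
    intro i hi
    rw [hb i hi]
    exact rho_block (hτr i hi) (hsc i hi) (han i hi)
  have hcards : ∀ i, i < m → (τ i \ range (bfun a n τ i)).card = a i - bfun a n τ i := by
    intro i hi
    rw [hb i hi]
    exact card_tau_sdiff (hτr i hi) (hsc i hi) (han i hi)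
  have hcardi : ∀ i, i < m →
      (τ i ∩ range (bfun a n τ i)).card = (τ i).card - (a i - bfun a n τ i) := by
    intro i hi
    rw [hb i hi]
    exact card_tau_inter (hτr i hi) (hsc i hi) (han i hi)
  have hsub : ∀ i, i < m → a i - bfun a n τ i ≤ (τ i).card := by
    intro i hi
    rw [hb i hi]
    exact a_sub_b_le_card (hτr i hi) (hsc i hi) (han i hi)
  have hpfτle : ∀ i, i < m → pf (τ i) ≤ bfun a n τ i := by
    intro i hi
    rw [hb i hi]
    exact pf_tau_le_pf_fill (hτr i hi) (hsc i hi) (han i hi)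
  have hGcard : (globF m (bfun a n τ) τ).card
      = ∑ i ∈ Finset.range m, ((τ i).card - (a i - bfun a n τ i)) := by
    rw [globF_card]
    exact Finset.sum_congr rfl (fun i hi => hcardi i (Finset.mem_range.mp hi))
  have hsum1 : ∑ i ∈ Finset.range m, a i
      = (∑ i ∈ Finset.range m, bfun a n τ i) + ∑ i ∈ Finset.range m, (a i - bfun a n τ i) := by
    rw [← Finset.sum_add_distrib]
    exact Finset.sum_congr rfl (fun i hi => by have := hble i; omega)
  have hsum2 : d = (globF m (bfun a n τ) τ).card
      + ∑ i ∈ Finset.range m, (a i - bfun a n τ i) := by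
    rw [hGcard, ← Finset.sum_add_distrib, ← hsum]
    exact Finset.sum_congr rfl (fun i hi => by
      have := hsub i (Finset.mem_range.mp hi); omega)
  have hBeq : (∑ t ∈ Finset.range m, bfun a n τ t) - ((∑ t ∈ Finset.range m, a t) - d)
      = (globF m (bfun a n τ) τ).card := by omega
  have hrho0 : rhoMap ((∑ t ∈ Finset.range m, bfun a n τ t) -
        ((∑ t ∈ Finset.range m, a t) - d)) (phiMap (globF m (bfun a n τ) τ))
      = globF m (bfun a n τ) τ \ range (pf (globF m (bfun a n τ) τ)) := by
    rw [hBeq]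
    exact rho_phi _
  have hPhi0 : PhiMapT m a n τ 0 = phiMap (globF m (bfun a n τ) τ) := by
    unfold PhiMapT; simp
  have hPhiS : ∀ i, i < m → PhiMapT m a n τ (i+1) = PhiBlock a n τ i := by
    intro i hi
    unfold PhiMapT
    rw [if_neg (by omega), if_pos (by omega)]
    simp
  have hslice : ∀ i, i < m →
      ((globF m (bfun a n τ) τ \ range (pf (globF m (bfun a n τ) τ))) ∩
        Finset.Ico (offF (bfun a n τ) i) (offF (bfun a n τ) i + bfun a n τ i)).image
        (fun j => j - offF (bfun a n τ) i)
      = (range (bfun a n τ i)).filter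
          (fun j => j ∈ τ i ∧ pf (globF m (bfun a n τ) τ) ≤ offF (bfun a n τ) i + j) := by
    intro i hi
    rw [image_slice]
    ext j
    simp only [Finset.mem_filter, Finset.mem_range, Finset.mem_sdiff, Finset.mem_range, not_lt]
    constructor
    · rintro ⟨hj, hG, hc⟩
      exact ⟨hj, (mem_globF_iff m _ τ hi hj).mp hG, hc⟩
    · rintro ⟨hj, hmem, hc⟩
      exact ⟨hj, (mem_globF_iff m _ τ hi hj).mpr hmem, hc⟩
  -- common facts
  have hupfull : ∀ i, i < m → (τ i).card = a i →
      upT a n τ i = τ i \ range (bfun a n τ i) := by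
    intro i hi hf
    have hfill := fill_full (hτr i hi) (hsc i hi) (han i hi) hf
    have hbe : bfun a n τ i = pf (τ i) := by rw [hb i hi, hfill]
    rw [hbe]
    unfold upT
    exact upT_full_eq (hτr i hi) (hsc i hi) (han i hi) hf
  have hupsub : ∀ i, upT a n τ i ⊆ τ i := by
    intro i
    unfold upT
    split
    · exact Finset.filter_subset _ _
    · exact Finset.empty_subset _
  have hGsub : globF m (bfun a n τ) τ ⊆ range (offF (bfun a n τ) m) := globF_subset m _ τ
  have hpart2 : ∀ i, i < m →
      upT a n τ i ∪ tailT m a n τ i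
        = rhoMap (a i) (PhiMapT m a n τ (i + 1)) ∪
          Finset.image (fun j => j - offF (bfun a n τ) i)
            (rhoMap ((∑ t ∈ Finset.range m, bfun a n τ t) -
                  ((∑ t ∈ Finset.range m, a t) - d)) (PhiMapT m a n τ 0) ∩
              Finset.Ico (offF (bfun a n τ) i)
                (offF (bfun a n τ) i + bfun a n τ i)) := by
    intro i hi
    rw [hPhiS i hi, hrho i hi, hPhi0, hrho0, hslice i hi]
    by_cases hall : ∀ t, t < m → (τ t).card = a t
    · -- all blocks full
      have hGfull : globF m (bfun a n τ) τ = range (offF (bfun a n τ) m) := by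
        apply Finset.Subset.antisymm hGsub
        intro x hx
        rw [Finset.mem_range] at hx
        obtain ⟨t, ht, h1, h2⟩ := block_exists _ m x hx
        have hfill := fill_full (hτr t ht) (hsc t ht) (han t ht) (hall t ht)
        have hbe : bfun a n τ t = pf (τ t) := by rw [hb t ht, hfill]
        have hx' : x = offF (bfun a n τ) t + (x - offF (bfun a n τ) t) := by omega
        rw [hx']
        exact (mem_globF_iff m _ τ ht (by omega)).mpr (lt_pf_mem _ (by omega))
      have hpfG : pf (globF m (bfun a n τ) τ) = offF (bfun a n τ) m := by
        rw [hGfull, pf_range]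
      have htail0 : tailT m a n τ i = ∅ := by
        unfold tailT
        rw [Finset.filter_eq_empty_iff]
        rintro j hj ⟨i₀, h₀m, h₀lt, -, -⟩
        have := hall i₀ h₀m
        omega
      have hfilt0 : (range (bfun a n τ i)).filter
          (fun j => j ∈ τ i ∧ pf (globF m (bfun a n τ) τ) ≤ offF (bfun a n τ) i + j) = ∅ := by
        rw [Finset.filter_eq_empty_iff]
        intro j hj
        rw [Finset.mem_range] at hj
        rw [hpfG]
        have h1 : offF (bfun a n τ) (i+1) ≤ offF (bfun a n τ) m := offF_mono _ (by omega)
        rw [offF_succ] at h1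
        rintro ⟨-, hc⟩
        omega
      rw [htail0, hfilt0, Finset.union_empty, Finset.union_empty]
      exact hupfull i hi (hall i hi)
    · -- there is a non-full block
      push_neg at hall
      have hex : ∃ t, t < m ∧ (τ t).card < a t := by
        obtain ⟨t, ht, hne⟩ := hall
        exact ⟨t, ht, lt_of_le_of_ne (hsc t ht) hne⟩
      classical
      set i₀ := Nat.find hex with hi₀def
      have hi₀m : i₀ < m := (Nat.find_spec hex).1
      have hi₀lt : (τ i₀).card < a i₀ := (Nat.find_spec hex).2
      have hmin : ∀ t, t < i₀ → (τ t).card = a t := by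
        intro t ht
        have h1 := Nat.find_min hex ht
        push_neg at h1
        have htm : t < m := by omega
        exact le_antisymm (hsc t htm) (h1 htm)
      have huniq : ∀ i', i' < m → (τ i').card < a i' →
          (∀ t, t < i' → (τ t).card = a t) → i' = i₀ := by
        intro i' h1 h2 h3
        rcases lt_trichotomy i' i₀ with h | h | h
        · have := hmin i' h; omega
        · exact h
        · have := h3 i₀ h; omega
      have hpfτlt : pf (τ i₀) < bfun a n τ i₀ := by
        rw [hb i₀ hi₀m]
        exact pf_lt_pf_fill (hτr i₀ hi₀m) (hsc i₀ hi₀m) (han i₀ hi₀m) hi₀lt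
      have hpfG : pf (globF m (bfun a n τ) τ)
          = offF (bfun a n τ) i₀ + pf (τ i₀) := by
        have hcsub : range (offF (bfun a n τ) i₀ + pf (τ i₀)) ⊆ globF m (bfun a n τ) τ := by
          intro x hx
          rw [Finset.mem_range] at hx
          have hxm : x < offF (bfun a n τ) m := by
            have h1 : offF (bfun a n τ) (i₀+1) ≤ offF (bfun a n τ) m := offF_mono _ (by omega)
            rw [offF_succ] at h1
            omega
          obtain ⟨t, ht, h1, h2⟩ := block_exists _ m x hxm
          have hx' : x = offF (bfun a n τ) t + (x - offF (bfun a n τ) t) := by omega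
          rw [hx']
          apply (mem_globF_iff m _ τ ht (by omega)).mpr
          rcases lt_trichotomy t i₀ with h | h | h
          · have hfill := fill_full (hτr t ht) (hsc t ht) (han t ht) (hmin t h)
            have hbe : bfun a n τ t = pf (τ t) := by rw [hb t ht, hfill]
            exact lt_pf_mem _ (by omega)
          · subst h
            exact lt_pf_mem _ (by omega)
          · exfalso
            have h3 : offF (bfun a n τ) (i₀+1) ≤ offF (bfun a n τ) t := offF_mono _ (by omega)
            rw [offF_succ] at h3
            omega
        have hcnot : offF (bfun a n τ) i₀ + pf (τ i₀) ∉ globF m (bfun a n τ) τ := by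
          intro hc
          exact pf_not_mem (τ i₀) ((mem_globF_iff m _ τ hi₀m hpfτlt).mp hc)
        have h1 := le_pf _ _ hcsub
        have h2 : ¬ (offF (bfun a n τ) i₀ + pf (τ i₀) < pf (globF m (bfun a n τ) τ)) :=
          fun h => hcnot (lt_pf_mem _ h)
        omega
      rw [hpfG]
      rcases lt_trichotomy i i₀ with hcase | hcase | hcase
      · -- i < i₀ : full block, empty tail and slice
        have htail0 : tailT m a n τ i = ∅ := by
          unfold tailT
          rw [Finset.filter_eq_empty_iff]
          rintro j hj ⟨i', h1, h2, h3, h4⟩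
          have := huniq i' h1 h2 h3
          omega
        have hfilt0 : (range (bfun a n τ i)).filter
            (fun j => j ∈ τ i ∧ offF (bfun a n τ) i₀ + pf (τ i₀) ≤ offF (bfun a n τ) i + j)
            = ∅ := by
          rw [Finset.filter_eq_empty_iff]
          intro j hj
          rw [Finset.mem_range] at hj
          rintro ⟨-, hc⟩
          have h1 : offF (bfun a n τ) (i+1) ≤ offF (bfun a n τ) i₀ := offF_mono _ (by omega)
          rw [offF_succ] at h1
          omega
        rw [htail0, hfilt0, Finset.union_empty, Finset.union_empty]
        exact hupfull i hi (hmin i hcase)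
      · -- i = i₀
        subst hcase
        have hup0 : upT a n τ i₀ = ∅ := by
          unfold upT
          rw [if_neg (by omega)]
        have htaileq : tailT m a n τ i₀ = τ i₀ \ range (pf (τ i₀)) := by
          unfold tailT
          ext j
          simp only [Finset.mem_filter, Finset.mem_sdiff, Finset.mem_range]
          constructor
          · rintro ⟨hj, i', h1, h2, h3, h4⟩
            have he := huniq i' h1 h2 h3
            refine ⟨hj, fun hlt => ?_⟩
            rcases h4 with h4 | ⟨-, g, hg1, hg2, -⟩
            · omega
            · exact hg2 (lt_pf_mem _ (by omega))
          · rintro ⟨hj, hjp⟩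
            refine ⟨hj, i₀, hi, hi₀lt, hmin, Or.inr ⟨rfl, pf (τ i₀), ?_, pf_not_mem _, ?_⟩⟩
            · have : j ≠ pf (τ i₀) := fun h => pf_not_mem _ (h ▸ hj)
              omega
            · have hjn := Finset.mem_range.mp (hτr i₀ hi hj)
              omega
        rw [hup0, htaileq, Finset.empty_union]
        ext x
        simp only [Finset.mem_sdiff, Finset.mem_union, Finset.mem_filter, Finset.mem_range]
        constructor
        · rintro ⟨hx, hxp⟩
          rcases Nat.lt_or_ge x (bfun a n τ i₀) with h | h
          · exact Or.inr ⟨h, hx, by omega⟩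
          · exact Or.inl ⟨hx, by omega⟩
        · rintro (⟨hx, hxb⟩ | ⟨hxb, hx, hxc⟩)
          · exact ⟨hx, by omega⟩
          · exact ⟨hx, by omega⟩
      · -- i₀ < i
        have htaileq : tailT m a n τ i = τ i := by
          unfold tailT
          apply Finset.filter_true_of_mem
          intro j hj
          exact ⟨i₀, hi₀m, hi₀lt, hmin, Or.inl hcase⟩
        have hceq : offF (bfun a n τ) i₀ + pf (τ i₀) ≤ offF (bfun a n τ) i := by
          have h1 : offF (bfun a n τ) (i₀+1) ≤ offF (bfun a n τ) i := offF_mono _ (by omega)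
          rw [offF_succ] at h1
          omega
        rw [htaileq, Finset.union_eq_right.mpr (hupsub i)]
        ext x
        simp only [Finset.mem_union, Finset.mem_sdiff, Finset.mem_filter, Finset.mem_range]
        constructor
        · intro hx
          rcases Nat.lt_or_ge x (bfun a n τ i) with h | h
          · exact Or.inr ⟨h, hx, by omega⟩
          · exact Or.inl ⟨hx, by omega⟩
        · rintro (⟨hx, -⟩ | ⟨-, hx, -⟩) <;> exact hx
  refine ⟨?_, hpart2⟩
  -- part 1: degree count
  have hcardPhiB : ∀ i, i < m → Multiset.card (PhiBlock a n τ i) = a i - bfun a n τ i := by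
    intro i hi
    unfold PhiBlock
    rw [phiMap_card, fill_card (hτr i hi) (hsc i hi) (han i hi), ← hb i hi]
  have hLHS : (∑ i ∈ Finset.range (m + 1), Multiset.card (PhiMapT m a n τ i))
      = ((globF m (bfun a n τ) τ).card - pf (globF m (bfun a n τ) τ))
        + ∑ i ∈ Finset.range m, (a i - bfun a n τ i) := by
    rw [Finset.sum_range_succ' (fun i => Multiset.card (PhiMapT m a n τ i)) m]
    rw [hPhi0, phiMap_card, Nat.add_comm]
    congr 1
    apply Finset.sum_congr rfl
    intro i hi
    rw [hPhiS i (Finset.mem_range.mp hi), hcardPhiB i (Finset.mem_range.mp hi)]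
  rw [hLHS]
  have hRHS : ∀ i, i < m → (upT a n τ i ∪ tailT m a n τ i).card
      = (a i - bfun a n τ i) +
        ((globF m (bfun a n τ) τ \ range (pf (globF m (bfun a n τ) τ))) ∩
          Finset.Ico (offF (bfun a n τ) i) (offF (bfun a n τ) i + bfun a n τ i)).card := by
    intro i hi
    rw [hpart2 i hi, hPhiS i hi, hrho i hi, hPhi0, hrho0]
    rw [Finset.card_union_of_disjoint]
    · congr 1
      · exact hcards i hi
      · apply Finset.card_image_of_injOn
        intro x hx y hy hxy
        rw [Finset.mem_coe, Finset.mem_inter, Finset.mem_Ico] at hx hy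
        simp only at hxy
        omega
    · rw [Finset.disjoint_left]
      intro x hx hx'
      rw [Finset.mem_sdiff, Finset.mem_range] at hx
      rw [hslice i hi, Finset.mem_filter, Finset.mem_range] at hx'
      omega
  rw [Finset.sum_congr rfl (fun i hi => hRHS i (Finset.mem_range.mp hi)),
    Finset.sum_add_distrib]
  rw [slice_card m _ _ (fun x hx => hGsub (Finset.mem_sdiff.mp hx).1)]
  rw [Finset.card_sdiff_of_subset (fun x hx => range_pf_subset _ hx), Finset.card_range]
  omega
end

section
/- With τ, γ, and τ' = bk(τ,γ) = (τ − v) ∪ w as above, where v ∈ V_i and w ∈ V_j: for every t with 1 ≤ t ≤ m and t ≠ i, fl(τ,t) = fl(τ',t) (hence Φ(τ) and Φ(τ') have the same X_t-parts); moreover fl(τ,i) ⪯ fl(τ',i) in revlex and deg(Φ(τ')_{X_i}) ≤ deg(Φ(τ)_{X_i}). -/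
open Finset

section Aux

lemma aux_mem_take_sorted (l : List ℕ) : ∀ (r x : ℕ), l.Pairwise (· < ·) →
    (x ∈ l.take r ↔ x ∈ l ∧ (l.filter (fun y => y < x)).length < r) := by
  induction l with
  | nil => simp
  | cons a t ih =>
    intro r x hs
    have hst : t.Pairwise (· < ·) := hs.of_cons
    have hat : ∀ y ∈ t, a < y := fun y hy => List.rel_of_pairwise_cons hs hy
    rcases r with _ | r
    · simp
    · rw [List.take_succ_cons]
      by_cases hxa : x = a
      · subst hxa
        have hfil : (x :: t).filter (fun y => y < x) = [] := by
          rw [List.filter_eq_nil_iff]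
          intro y hy
          rcases List.mem_cons.1 hy with h | h
          · subst h; simp
          · have := hat y h
            simp only [decide_eq_true_eq, not_lt]
            omega
        simp [hfil]
      · have hiff := ih r x hst
        rw [List.mem_cons, List.mem_cons, List.filter_cons]
        by_cases hax : a < x
        · simp only [hax, decide_eq_true_eq, if_pos, List.length_cons]
          constructor
          · intro h
            rcases h with h | h
            · exact absurd h hxa
            · have := hiff.1 h
              exact ⟨Or.inr this.1, by omega⟩
          · rintro ⟨hm, hlen⟩
            rcases hm with hm | hm
            · exact absurd hm hxa
            · exact Or.inr (hiff.2 ⟨hm, by omega⟩)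
        · rw [if_neg (by simpa using hax)]
          constructor
          · intro h
            rcases h with h | h
            · exact absurd h hxa
            · have := hiff.1 h
              exact ⟨Or.inr this.1, by omega⟩
          · rintro ⟨hm, hlen⟩
            rcases hm with hm | hm
            · exact absurd hm hxa
            · exact absurd (hat x hm) hax

lemma aux_length_filter_sort (s : Finset ℕ) (p : ℕ → Prop) [DecidablePred p] :
    ((s.sort (· ≤ ·)).filter (fun y => p y)).length = (s.filter p).card := by
  rw [← List.countP_eq_length_filter]
  rw [(Finset.sort_perm_toList s (· ≤ ·)).countP_eq (fun y => decide (p y))]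
  rw [← Multiset.coe_countP, Finset.coe_toList, Multiset.countP_eq_card_filter]
  rfl

lemma aux_sort_pairwise_lt (s : Finset ℕ) : (s.sort (· ≤ ·)).Pairwise (· < ·) :=
  (Finset.sortedLT_sort s).pairwise

lemma aux_mem_fillF (s : Finset ℕ) (k N x : ℕ) :
    x ∈ fillF s k N ↔ x ∈ s ∨ (x ∈ Finset.range N \ s ∧
      ((Finset.range N \ s).filter (· < x)).card < k - s.card) := by
  unfold fillF
  rw [Finset.mem_union, List.mem_toFinset,
    aux_mem_take_sorted _ _ _ (aux_sort_pairwise_lt _), Finset.mem_sort,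
    aux_length_filter_sort]

def auxZc (j : ℕ) (l : List ℕ) : ℕ :=
  ((l.zipIdx j).map (fun p => p.1 - p.2)).countP (fun x => decide (x = 0))

lemma auxZc_cons (j a : ℕ) (t : List ℕ) :
    auxZc j (a :: t) = (if a - j = 0 then 1 else 0) + auxZc (j + 1) t := by
  simp only [auxZc, List.zipIdx_cons, List.map_cons, List.countP_cons]
  split <;> rename_i h <;> simp at h <;> simp [h] <;> omega

lemma auxZc_zero (l : List ℕ) : ∀ j, l.Pairwise (· < ·) → (∀ x ∈ l, j < x) →
    auxZc j l = 0 := by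
  induction l with
  | nil => intro j _ _; rfl
  | cons a t ih =>
    intro j hs h
    rw [auxZc_cons]
    have ha : j < a := h a (List.mem_cons_self)
    rw [if_neg (by omega)]
    rw [ih (j+1) hs.of_cons (fun x hx => by
      have := List.rel_of_pairwise_cons hs hx; omega)]

lemma auxZc_ge (l : List ℕ) : ∀ j r, l.Pairwise (· < ·) → (∀ x ∈ l, j ≤ x) →
    (∀ x, j ≤ x → x < j + r → x ∈ l) → r ≤ l.length → r ≤ auxZc j l := by
  induction l with
  | nil => intro j r _ _ _ hr; simp at hr; omega
  | cons a t ih =>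
    intro j r hs hlb hseg hr
    rcases r with _ | r
    · exact Nat.zero_le _
    · have hj : j ∈ a :: t := hseg j le_rfl (by omega)
      have hja : j = a := by
        rcases List.mem_cons.1 hj with h | h
        · exact h
        · have := List.rel_of_pairwise_cons hs h
          have := hlb a (List.mem_cons_self)
          omega
      rw [auxZc_cons, if_pos (by omega)]
      have : r ≤ auxZc (j + 1) t := by
        refine ih (j+1) r hs.of_cons (fun x hx => by
            have := List.rel_of_pairwise_cons hs hx; omega) ?_ (by simpa using hr)
        intro x hx1 hx2
        have hxl : x ∈ a :: t := hseg x (by omega) (by omega)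
        rcases List.mem_cons.1 hxl with h | h
        · omega
        · exact h
      omega

lemma auxZc_le (l : List ℕ) : ∀ j r, l.Pairwise (· < ·) → (∀ x ∈ l, j ≤ x) →
    j + r ∉ l → auxZc j l ≤ r := by
  induction l with
  | nil => intro j r _ _ _; simp [auxZc]
  | cons a t ih =>
    intro j r hs hlb hnm
    by_cases hja : a = j
    · rcases r with _ | r
      · exact absurd (by simp [hja.symm] : j + 0 ∈ a :: t) hnm
      · rw [auxZc_cons, if_pos (by omega)]
        have : auxZc (j+1) t ≤ r := by
          refine ih (j+1) r hs.of_cons (fun x hx => by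
            have := List.rel_of_pairwise_cons hs hx; omega) ?_
          intro h
          have : j + (r + 1) ∈ a :: t := List.mem_cons_of_mem a (by
            have heq : j + 1 + r = j + (r + 1) := by omega
            rwa [heq] at h)
          exact hnm this
        omega
    · have ha : j < a := by
        have := hlb a (List.mem_cons_self); omega
      rw [auxZc_zero (a :: t) j hs (fun x hx => by
        rcases List.mem_cons.1 hx with h | h
        · omega
        · have := List.rel_of_pairwise_cons hs h; omega)]
      exact Nat.zero_le r

lemma aux_card_phiMap_add (F : Finset ℕ) :
    Multiset.card (phiMap F) + auxZc 0 (F.sort (· ≤ ·)) = F.card := by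
  unfold phiMap auxZc
  rw [Multiset.coe_card]
  have h1 : (F.sort (· ≤ ·)).zipIdx = (F.sort (· ≤ ·)).zipIdx 0 := rfl
  rw [← h1]
  set L := (F.sort (· ≤ ·)).zipIdx.map (fun p : ℕ × ℕ => p.1 - p.2) with hL
  have h0 : (L.filter (fun x => x ≠ 0)).length = L.countP (fun x => decide (x ≠ 0)) := by
    rw [← List.countP_eq_length_filter]
  rw [h0]
  have h2 : L.length = L.countP (fun x => decide (x = 0)) +
      L.countP (fun x => !decide (x = 0)) := by
    have := List.length_eq_countP_add_countP (fun x : ℕ => x = 0) (l := L)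
    rw [this]
    congr 1
    apply List.countP_congr; intro x _; simp
  have h3 : L.countP (fun x => !decide (x = 0)) = L.countP (fun x => decide (x ≠ 0)) := by
    apply List.countP_congr; intro x _; simp
  have h4 : L.length = F.card := by
    rw [hL, List.length_map, List.length_zipIdx, Finset.length_sort]
  omega

lemma aux_cnt_insert (D : Finset ℕ) (j y : ℕ) (hj : j ∉ D) :
    ((insert j D).filter (· < y)).card
      = (D.filter (· < y)).card + (if j < y then 1 else 0) := by
  rw [Finset.filter_insert]
  split
  · rw [Finset.card_insert_of_notMem (by simp [hj])]
  · simp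

lemma aux_sdiff_erase_eq (s : Finset ℕ) (N jv : ℕ) (hN : jv < N) :
    Finset.range N \ s.erase jv = insert jv (Finset.range N \ s) := by
  ext z
  simp only [Finset.mem_sdiff, Finset.mem_erase, Finset.mem_insert, Finset.mem_range]
  constructor
  · rintro ⟨hz, hz2⟩
    by_cases h : z = jv
    · exact Or.inl h
    · exact Or.inr ⟨hz, fun hzs => hz2 ⟨h, hzs⟩⟩
  · rintro (h | ⟨h1, h2⟩)
    · exact ⟨by omega, fun h' => h'.1 h⟩
    · exact ⟨h1, fun h' => h2 h'.2⟩

lemma aux_sdiff_insert_eq (s : Finset ℕ) (N j₀ : ℕ) (hj : j₀ ∉ s) (hN : j₀ < N) :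
    Finset.range N \ s = insert j₀ (Finset.range N \ insert j₀ s) := by
  ext z
  simp only [Finset.mem_sdiff, Finset.mem_insert, Finset.mem_range]
  constructor
  · rintro ⟨h1, h2⟩
    by_cases h : z = j₀
    · exact Or.inl h
    · exact Or.inr ⟨h1, by tauto⟩
  · rintro (h | ⟨h1, h2⟩)
    · subst h; exact ⟨hN, hj⟩
    · exact ⟨h1, by tauto⟩

lemma aux_fillF_insert_min (s : Finset ℕ) (k N j₀ : ℕ) (hjN : j₀ < N) (hjs : j₀ ∉ s)
    (hmin : ∀ g, g < j₀ → g ∈ s) (hcard : s.card < k) :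
    fillF (insert j₀ s) k N = fillF s k N := by
  have hD : Finset.range N \ s = insert j₀ (Finset.range N \ insert j₀ s) :=
    aux_sdiff_insert_eq s N j₀ hjs hjN
  have hj₀nD : j₀ ∉ Finset.range N \ insert j₀ s := by simp
  have hcardi : (insert j₀ s).card = s.card + 1 := Finset.card_insert_of_notMem hjs
  have hcnt : ∀ y, ((Finset.range N \ s).filter (· < y)).card
      = ((Finset.range N \ insert j₀ s).filter (· < y)).card + (if j₀ < y then 1 else 0) := by
    intro y; rw [hD, aux_cnt_insert _ _ _ hj₀nD]
  have hcnt0 : ((Finset.range N \ s).filter (· < j₀)).card = 0 := by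
    rw [Finset.card_eq_zero, Finset.filter_eq_empty_iff]
    intro y hy
    simp only [Finset.mem_sdiff, Finset.mem_range] at hy
    simp only [not_lt]
    by_contra h
    exact hy.2 (hmin y (by omega))
  ext x
  rw [aux_mem_fillF, aux_mem_fillF]
  simp only [Finset.mem_sdiff, Finset.mem_range, Finset.mem_insert, hcardi]
  constructor
  · rintro (h | ⟨⟨h1, h2⟩, h3⟩)
    · rcases h with h | h
      · subst h
        exact Or.inr ⟨⟨hjN, hjs⟩, by rw [hcnt0]; omega⟩
      · exact Or.inl h
    · push_neg at h2
      have hx : j₀ < x := by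
        rcases Nat.lt_trichotomy x j₀ with h | h | h
        · exact absurd (hmin x h) h2.2
        · exact absurd h h2.1
        · exact h
      refine Or.inr ⟨⟨h1, h2.2⟩, ?_⟩
      have := hcnt x
      simp only [hx, if_pos] at this
      omega
  · rintro (h | ⟨⟨h1, h2⟩, h3⟩)
    · exact Or.inl (Or.inr h)
    · by_cases hx : x = j₀
      · exact Or.inl (Or.inl hx)
      · have hx2 : j₀ < x := by
          rcases Nat.lt_trichotomy x j₀ with h | h | h
          · exact absurd (hmin x h) h2
          · exact absurd h hx
          · exact h
        refine Or.inr ⟨⟨h1, by tauto⟩, ?_⟩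
        have := hcnt x
        simp only [hx2, if_pos] at this
        omega

lemma aux_fillF_erase (s : Finset ℕ) (k N jv : ℕ) (hs : s ⊆ Finset.range N) (hjv : jv ∈ s)
    (hk : s.card ≤ k) :
    fillF s k N = fillF (s.erase jv) k N ∨
      RevGTN (fillF (s.erase jv) k N) (fillF s k N) := by
  have hjN : jv < N := by have := hs hjv; simpa using this
  have hcards : 1 ≤ s.card := Finset.card_pos.2 ⟨jv, hjv⟩
  have hce : (s.erase jv).card = s.card - 1 := Finset.card_erase_of_mem hjv
  have hD : Finset.range N \ s.erase jv = insert jv (Finset.range N \ s) :=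
    aux_sdiff_erase_eq s N jv hjN
  have hjnD : jv ∉ Finset.range N \ s := by simp [hjv]
  have hcnt : ∀ y, ((Finset.range N \ s.erase jv).filter (· < y)).card
      = ((Finset.range N \ s).filter (· < y)).card + (if jv < y then 1 else 0) := by
    intro y; rw [hD, aux_cnt_insert _ _ _ hjnD]
  set r := k - s.card with hrdef
  have hr1 : k - (s.erase jv).card = r + 1 := by omega
  by_cases hc : ((Finset.range N \ s).filter (· < jv)).card ≤ r
  · left
    ext x
    rw [aux_mem_fillF, aux_mem_fillF, hce]
    simp only [Finset.mem_sdiff, Finset.mem_range, Finset.mem_erase]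
    constructor
    · rintro (h | ⟨⟨h1, h2⟩, h3⟩)
      · by_cases hx : x = jv
        · subst hx
          refine Or.inr ⟨⟨hjN, fun hh => hh.1 rfl⟩, ?_⟩
          rw [hcnt x]
          simp only [lt_irrefl, if_neg, if_false]
          omega
        · exact Or.inl ⟨hx, h⟩
      · refine Or.inr ⟨⟨h1, fun hh => h2 hh.2⟩, ?_⟩
        rw [hcnt x]
        split <;> omega
    · rintro (⟨hx, h⟩ | ⟨⟨h1, h2⟩, h3⟩)
      · exact Or.inl h
      · by_cases hxjv0 : x = jv
        · exact Or.inl (hxjv0 ▸ hjv)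
        · by_cases hxs : x ∈ s
          · exact Or.inl hxs
          · rw [hcnt x] at h3
            refine Or.inr ⟨⟨h1, hxs⟩, ?_⟩
            by_cases hlt : jv < x
            · simp only [hlt, if_pos] at h3; omega
            · have hxlt : x < jv := by omega
              have hsub : insert x ((Finset.range N \ s).filter (· < x)) ⊆
                  (Finset.range N \ s).filter (· < jv) := by
                intro y hy
                rcases Finset.mem_insert.1 hy with h | h
                · subst h
                  exact Finset.mem_filter.2
                    ⟨Finset.mem_sdiff.2 ⟨Finset.mem_range.2 h1, hxs⟩, hxlt⟩
                · have := Finset.mem_filter.1 h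
                  exact Finset.mem_filter.2 ⟨this.1, by omega⟩
              have hxn : x ∉ (Finset.range N \ s).filter (· < x) := by simp
              have := Finset.card_le_card hsub
              rw [Finset.card_insert_of_notMem hxn] at this
              omega
  · right
    refine ⟨jv, (aux_mem_fillF s k N jv).2 (Or.inl hjv), ?_, ?_⟩
    · rw [aux_mem_fillF, hce]
      push_neg
      refine ⟨by simp, ?_⟩
      intro _
      rw [hcnt jv]
      simp only [lt_irrefl, if_neg, if_false]
      omega
    · intro w hw
      rw [aux_mem_fillF, aux_mem_fillF, hce]
      have hwjv : w ≠ jv := by omega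
      simp only [Finset.mem_sdiff, Finset.mem_range, Finset.mem_erase]
      rw [hcnt w]
      simp only [hw, if_pos]
      constructor
      · rintro (⟨_, h⟩ | ⟨⟨h1, h2⟩, h3⟩)
        · exact Or.inl h
        · exact Or.inr ⟨⟨h1, fun hh => h2 ⟨hwjv, hh⟩⟩, by omega⟩
      · rintro (h | ⟨⟨h1, h2⟩, h3⟩)
        · exact Or.inl ⟨hwjv, h⟩
        · exact Or.inr ⟨⟨h1, fun hh => h2 hh.2⟩, by omega⟩

lemma aux_fillF_self (s : Finset ℕ) (k N : ℕ) (h : k ≤ s.card) : fillF s k N = s := by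
  unfold fillF
  rw [Nat.sub_eq_zero_of_le h]
  simp

lemma aux_card_fillF (s : Finset ℕ) (k N : ℕ) (hs : s ⊆ Finset.range N) (h1 : s.card ≤ k)
    (h2 : k ≤ N) : (fillF s k N).card = k := by
  unfold fillF
  set D := Finset.range N \ s with hD
  have hDcard : D.card = N - s.card := by
    rw [hD, Finset.card_sdiff_of_subset hs, Finset.card_range]
  have hnd : ((D.sort (· ≤ ·)).take (k - s.card)).Nodup :=
    (List.take_sublist _ _).nodup (Finset.sort_nodup _ _)
  have hlen : ((D.sort (· ≤ ·)).take (k - s.card)).length = k - s.card := by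
    rw [List.length_take, Finset.length_sort, hDcard]
    omega
  have hdisj : Disjoint s ((D.sort (· ≤ ·)).take (k - s.card)).toFinset := by
    rw [Finset.disjoint_right]
    intro x hx
    have : x ∈ D := by
      rw [List.mem_toFinset] at hx
      exact (Finset.mem_sort _).1 (List.mem_of_mem_take hx)
    rw [hD, Finset.mem_sdiff] at this
    exact fun hxs => this.2 hxs
  rw [Finset.card_union_of_disjoint hdisj, List.toFinset_card_of_nodup hnd, hlen]
  omega

lemma aux_GE (s : Finset ℕ) (k N jv g : ℕ) (hs : s ⊆ Finset.range N) (hjv : jv ∈ s)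
    (hk : s.card ≤ k) (hg : ∀ x, x < g → x ∈ fillF s k N) :
    ∀ x, x < g → x ∈ fillF (s.erase jv) k N := by
  have hjN : jv < N := by have := hs hjv; simpa using this
  have hcards : 1 ≤ s.card := Finset.card_pos.2 ⟨jv, hjv⟩
  have hce : (s.erase jv).card = s.card - 1 := Finset.card_erase_of_mem hjv
  have hD : Finset.range N \ s.erase jv = insert jv (Finset.range N \ s) :=
    aux_sdiff_erase_eq s N jv hjN
  have hjnD : jv ∉ Finset.range N \ s := by simp [hjv]
  have hcnt : ∀ y, ((Finset.range N \ s.erase jv).filter (· < y)).card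
      = ((Finset.range N \ s).filter (· < y)).card + (if jv < y then 1 else 0) := by
    intro y; rw [hD, aux_cnt_insert _ _ _ hjnD]
  set r := k - s.card with hrdef
  have hr1 : k - (s.erase jv).card = r + 1 := by omega
  intro x hxg
  have hxF := hg x hxg
  rw [aux_mem_fillF] at hxF
  rw [aux_mem_fillF, hce, hcnt x]
  by_cases hxs : x ∈ s
  · by_cases hxjv : x = jv
    · subst hxjv
      right
      refine ⟨Finset.mem_sdiff.2 ⟨Finset.mem_range.2 hjN, by simp⟩, ?_⟩
      simp only [lt_irrefl, if_neg, if_false]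
      by_contra hcon
      push_neg at hcon
      set Dlow := (Finset.range N \ s).filter (· < x) with hDlow
      have hne : Dlow.Nonempty := by
        rw [← Finset.card_pos]; omega
      set x' := Dlow.max' hne with hx'
      have hx'mem : x' ∈ Dlow := Finset.max'_mem _ _
      have hx'D : x' ∈ Finset.range N \ s := (Finset.mem_filter.1 hx'mem).1
      have hx'lt : x' < x := by
        have := (Finset.mem_filter.1 hx'mem).2
        simpa using this
      have hx'F := hg x' (by omega)
      rw [aux_mem_fillF] at hx'F
      have hx'ns : x' ∉ s := (Finset.mem_sdiff.1 hx'D).2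
      have hx'cnt : ((Finset.range N \ s).filter (· < x')).card < r := by
        rcases hx'F with h | ⟨_, h⟩
        · exact absurd h hx'ns
        · exact h
      have hsub : Dlow.erase x' ⊆ (Finset.range N \ s).filter (· < x') := by
        intro y hy
        have hy1 := Finset.mem_erase.1 hy
        have hy2 := Finset.mem_filter.1 hy1.2
        have hle : y ≤ x' := Finset.le_max' _ _ hy1.2
        refine Finset.mem_filter.2 ⟨hy2.1, ?_⟩
        have hne2 : y ≠ x' := hy1.1
        have := hy2.2
        omega
      have := Finset.card_le_card hsub
      rw [Finset.card_erase_of_mem hx'mem] at this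
      omega
    · exact Or.inl (Finset.mem_erase.2 ⟨hxjv, hxs⟩)
  · rcases hxF with h | ⟨h1, h2⟩
    · exact absurd h hxs
    · right
      have h1' := Finset.mem_sdiff.1 h1
      refine ⟨Finset.mem_sdiff.2 ⟨h1'.1, by simp [hxs]⟩, ?_⟩
      split <;> omega

lemma aux_gap_exists (F : Finset ℕ) : ∃ x, x ∉ F := Infinite.exists_notMem_finset F

def gapF (F : Finset ℕ) : ℕ := Nat.find (aux_gap_exists F)

lemma gapF_not_mem (F : Finset ℕ) : gapF F ∉ F := Nat.find_spec (aux_gap_exists F)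

lemma gapF_mem (F : Finset ℕ) : ∀ x, x < gapF F → x ∈ F :=
  fun x hx => of_not_not (Nat.find_min (aux_gap_exists F) hx)

lemma gapF_le (F : Finset ℕ) (x : ℕ) (hx : x ∉ F) : gapF F ≤ x :=
  Nat.find_le hx

lemma aux_deg_le_of_gap (F F' : Finset ℕ) (hcard : F'.card ≤ F.card) (g : ℕ)
    (hgF : g ∉ F) (hgF' : ∀ x, x < g → x ∈ F') :
    Multiset.card (phiMap F') ≤ Multiset.card (phiMap F) := by
  have h1 : auxZc 0 (F.sort (· ≤ ·)) ≤ g := by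
    apply auxZc_le _ 0 g (aux_sort_pairwise_lt F) (fun x _ => Nat.zero_le x)
    rw [Nat.zero_add, Finset.mem_sort]
    exact hgF
  have hgcard : g ≤ F'.card := by
    have hsub : Finset.range g ⊆ F' := fun x hx => hgF' x (Finset.mem_range.1 hx)
    have := Finset.card_le_card hsub
    simpa using this
  have h2 : g ≤ auxZc 0 (F'.sort (· ≤ ·)) := by
    apply auxZc_ge _ 0 g (aux_sort_pairwise_lt F') (fun x _ => Nat.zero_le x)
    · intro x _ hx
      rw [Finset.mem_sort]
      exact hgF' x (by omega)
    · rw [Finset.length_sort]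
      exact hgcard
  have h3 := aux_card_phiMap_add F
  have h4 := aux_card_phiMap_add F'
  omega

lemma aux_deg_erase (s : Finset ℕ) (k N jv : ℕ) (hs : s ⊆ Finset.range N) (hjv : jv ∈ s)
    (hk : s.card ≤ k) (hkN : k ≤ N) :
    Multiset.card (phiMap (fillF (s.erase jv) k N)) ≤
      Multiset.card (phiMap (fillF s k N)) := by
  have hes : s.erase jv ⊆ Finset.range N := (Finset.erase_subset _ _).trans hs
  have hec : (s.erase jv).card ≤ k := (Finset.card_le_card (Finset.erase_subset _ _)).trans hk
  refine aux_deg_le_of_gap _ _ ?_ (gapF (fillF s k N)) (gapF_not_mem _) ?_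
  · rw [aux_card_fillF _ _ _ hes hec hkN, aux_card_fillF _ _ _ hs hk hkN]
  · exact aux_GE s k N jv _ hs hjv hk (gapF_mem _)

end Aux

/-- For `τ' = bk(τ,γ) = (τ - v) ∪ w` with `v` in block `iv`: for every block `t ≠ iv`,
`fl(τ,t) = fl(τ',t)` (so `Φ(τ)` and `Φ(τ')` have the same `X_t`-parts); moreover
`fl(τ,iv) ⪯ fl(τ',iv)` in revlex and `deg Φ(τ')_{X_iv} ≤ deg Φ(τ)_{X_iv}`. -/

theorem stmt14 (m d : ℕ) (n a : ℕ → ℕ)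
    (hd1 : 1 ≤ d) (hd2 : d ≤ ∑ i ∈ Finset.range m, a i)
    (ha : ∀ i, i < m → 0 < a i ∧ a i ≤ n i)
    (τ : ℕ → Finset ℕ) (hτ : IsFacetT m d n a τ)
    (iv jv i₀ j₀ : ℕ) (hiv : iv < m)
    (hswap :
      (jv ∈ tailT m a n τ iv ∧ i₀ < m ∧ (τ i₀).card < a i₀ ∧
        (∀ t, t < i₀ → (τ t).card = a t) ∧ j₀ < n i₀ ∧ j₀ ∉ τ i₀ ∧
        (∀ g, g < j₀ → g ∈ τ i₀)) ∨
      (jv ∈ upT a n τ iv ∧ i₀ = iv ∧ j₀ < n iv ∧ j₀ ∉ τ iv ∧ (∀ g, g < j₀ → g ∈ τ iv)))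
    (τ' : ℕ → Finset ℕ)
    (hτ' : τ' = fun t => (if t = i₀ then insert j₀ else id)
        (if t = iv then (τ t).erase jv else τ t)) :
    (∀ t, t < m → t ≠ iv →
      fillF (τ' t) (a t) (n t) = fillF (τ t) (a t) (n t) ∧
      PhiBlock a n τ' t = PhiBlock a n τ t) ∧
    (fillF (τ iv) (a iv) (n iv) = fillF (τ' iv) (a iv) (n iv) ∨
      RevGTN (fillF (τ' iv) (a iv) (n iv)) (fillF (τ iv) (a iv) (n iv))) ∧
    Multiset.card (PhiBlock a n τ' iv) ≤ Multiset.card (PhiBlock a n τ iv) := by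
  obtain ⟨hτsub, hτcard, -, -⟩ := hτ
  have hsub : τ iv ⊆ Finset.range (n iv) := hτsub iv hiv
  have hcardiv : (τ iv).card ≤ a iv := hτcard iv hiv
  have hkN : a iv ≤ n iv := (ha iv hiv).2
  have hjvτ : jv ∈ τ iv := by
    rcases hswap with ⟨h1, -⟩ | ⟨h1, -⟩
    · exact (Finset.mem_filter.1 h1).1
    · unfold upT at h1
      split at h1
      · exact (Finset.mem_filter.1 h1).1
      · simp at h1
  have hjvN : jv < n iv := by have := hsub hjvτ; simpa using this
  refine ⟨?_, ?_⟩
  · -- blocks t ≠ iv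
    intro t ht htiv
    by_cases hti : t = i₀
    · rcases hswap with ⟨h1, hi₀m, hc₀, hfull, hj₀N, hj₀τ, hmin⟩ | ⟨h1, hi₀, hrest⟩
      · subst hti
        have hτ't : τ' t = insert j₀ (τ t) := by
          rw [hτ']
          simp [htiv]
        have heq := aux_fillF_insert_min (τ t) (a t) (n t) j₀ hj₀N hj₀τ hmin hc₀
        constructor
        · rw [hτ't]; exact heq
        · unfold PhiBlock
          rw [hτ't, heq]
      · exact absurd (hti.trans hi₀) htiv
    · have hτ't : τ' t = τ t := by
        rw [hτ']
        simp [hti, htiv]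
      constructor
      · rw [hτ't]
      · unfold PhiBlock
        rw [hτ't]
  · -- block iv
    rcases hswap with ⟨h1, hi₀m, hc₀, hfull, hj₀N, hj₀τ, hmin⟩ | ⟨h1, hi₀, hj₀N, hj₀τ, hmin⟩
    · -- tail case
      by_cases hi0iv : i₀ = iv
      · subst hi0iv
        have hclt : (τ i₀).card < a i₀ := hc₀
        have hjvj₀ : jv ≠ j₀ := fun h => hj₀τ (h ▸ hjvτ)
        have hτ'iv : τ' i₀ = insert j₀ ((τ i₀).erase jv) := by
          rw [hτ']
          simp
        rcases Nat.lt_or_ge jv j₀ with hlt | hge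
        · -- jv < j₀ : fills are equal
          have hstep1 : fillF (insert jv (insert j₀ ((τ i₀).erase jv))) (a i₀) (n i₀)
              = fillF (insert j₀ ((τ i₀).erase jv)) (a i₀) (n i₀) := by
            apply aux_fillF_insert_min _ _ _ _ hjvN
            · simp only [Finset.mem_insert, Finset.mem_erase]
              push_neg
              exact ⟨hjvj₀, fun h => absurd rfl h⟩
            · intro g hg
              simp only [Finset.mem_insert, Finset.mem_erase]
              exact Or.inr ⟨by omega, hmin g (by omega)⟩
            · rw [Finset.card_insert_of_notMem (by simp [hj₀τ]),
                Finset.card_erase_of_mem hjvτ]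
              have : 1 ≤ (τ i₀).card := Finset.card_pos.2 ⟨jv, hjvτ⟩
              omega
          have hstep2 : insert jv (insert j₀ ((τ i₀).erase jv)) = insert j₀ (τ i₀) := by
            ext z
            simp only [Finset.mem_insert, Finset.mem_erase]
            by_cases hz : z = jv <;> simp [hz, hjvτ] <;> tauto
          have hstep3 : fillF (insert j₀ (τ i₀)) (a i₀) (n i₀) = fillF (τ i₀) (a i₀) (n i₀) :=
            aux_fillF_insert_min _ _ _ _ hj₀N hj₀τ hmin hclt
          have heq : fillF (τ' i₀) (a i₀) (n i₀) = fillF (τ i₀) (a i₀) (n i₀) := by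
            rw [hτ'iv, ← hstep1, hstep2, hstep3]
          exact ⟨Or.inl heq.symm, by unfold PhiBlock; rw [heq]⟩
        · -- j₀ < jv
          have hj₀lt : j₀ < jv := by omega
          have heq : fillF (τ' i₀) (a i₀) (n i₀) = fillF ((τ i₀).erase jv) (a i₀) (n i₀) := by
            rw [hτ'iv]
            apply aux_fillF_insert_min _ _ _ _ hj₀N
            · simp [hj₀τ]
            · intro g hg
              exact Finset.mem_erase.2 ⟨by omega, hmin g hg⟩
            · rw [Finset.card_erase_of_mem hjvτ]
              omega
          constructor
          · rcases aux_fillF_erase (τ i₀) (a i₀) (n i₀) jv hsub hjvτ hcardiv with h | h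
            · exact Or.inl (h.trans heq.symm)
            · right
              rw [heq]
              exact h
          · unfold PhiBlock
            rw [heq]
            exact aux_deg_erase _ _ _ _ hsub hjvτ hcardiv hkN
      · -- i₀ ≠ iv : τ' iv is an erase
        have hτ'iv : τ' iv = (τ iv).erase jv := by
          rw [hτ']
          simp only [if_pos rfl]
          rw [if_neg (fun h : iv = i₀ => hi0iv h.symm)]
          rfl
        rw [hτ'iv]
        constructor
        · exact aux_fillF_erase (τ iv) (a iv) (n iv) jv hsub hjvτ hcardiv
        · unfold PhiBlock
          rw [hτ'iv]
          exact aux_deg_erase _ _ _ _ hsub hjvτ hcardiv hkN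
    · -- up case : i₀ = iv, full block
      subst hi₀
      have hcard : (τ i₀).card = a i₀ := by
        unfold upT at h1
        split at h1
        · assumption
        · simp at h1
      obtain ⟨-, g, hgmem, hglt⟩ :
          jv ∈ τ i₀ ∧ ∃ g ∈ Finset.range (n i₀) \ τ i₀, g < jv := by
        have := Finset.mem_filter.1 (by
          unfold upT at h1
          rwa [if_pos hcard] at h1)
        exact ⟨this.1, this.2⟩
      have hgτ : g ∉ τ i₀ := (Finset.mem_sdiff.1 hgmem).2
      have hj₀g : j₀ ≤ g := by
        by_contra h
        exact hgτ (hmin g (by omega))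
      have hj₀jv : j₀ < jv := by omega
      have hτ'iv : τ' i₀ = insert j₀ ((τ i₀).erase jv) := by
        rw [hτ']
        simp
      have hfs : fillF (τ i₀) (a i₀) (n i₀) = τ i₀ := aux_fillF_self _ _ _ (le_of_eq hcard.symm)
      have hone : 1 ≤ (τ i₀).card := Finset.card_pos.2 ⟨jv, hjvτ⟩
      have hcard' : (insert j₀ ((τ i₀).erase jv)).card = a i₀ := by
        rw [Finset.card_insert_of_notMem (by simp [hj₀τ]),
          Finset.card_erase_of_mem hjvτ]
        omega
      have hfs' : fillF (τ' i₀) (a i₀) (n i₀) = τ' i₀ := by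
        apply aux_fillF_self
        rw [hτ'iv, hcard']
      constructor
      · right
        rw [hfs, hfs', hτ'iv]
        refine ⟨jv, hjvτ, ?_, ?_⟩
        · simp only [Finset.mem_insert, Finset.mem_erase]
          push_neg
          exact ⟨by omega, fun h => absurd rfl h⟩
        · intro w hw
          simp only [Finset.mem_insert, Finset.mem_erase]
          constructor
          · rintro (h | ⟨-, h⟩)
            · omega
            · exact h
          · intro h
            exact Or.inr ⟨by omega, h⟩
      · unfold PhiBlock
        rw [hfs, hfs', hτ'iv]
        refine aux_deg_le_of_gap _ _ (by rw [hcard', hcard]) (gapF (τ i₀))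
          (gapF_not_mem _) ?_
        intro x hx
        have hxτ : x ∈ τ i₀ := gapF_mem _ x hx
        have hgap_le : gapF (τ i₀) ≤ j₀ := gapF_le _ _ hj₀τ
        simp only [Finset.mem_insert, Finset.mem_erase]
        exact Or.inr ⟨by omega, hxτ⟩
end
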